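/- arXiv:2405.15653 — 4 statements merged into one kernel-verified Lean document; each statement's English description precedes it below -/
import Mathlib

section
/- Let A be a C*-algebra, H₀ a complex Hilbert space, S a set, and k : S × S → B(A, B(H₀)). Suppose (H, π, ζ) and (H', π', ζ') are two minimal dilations of k, i.e. π : A → B(H) and π' : A → B(H') are nondegenerate representations, ζ : S → B(H₀,H) and ζ' : S → B(H₀,H') satisfy k(s,t)(a) = ζ(s)* π(a) ζ(t) = ζ'(s)* π'(a) ζ'(t) for all s, t ∈ S, a ∈ A, and the closed linear spans of {π(a)ζ(s)ξ : a ∈ A, s ∈ S, ξ ∈ H₀} and of {π'(a)ζ'(s)ξ : a ∈ A, s ∈ S, ξ ∈ H₀} equal H and H' respectively. Then there is a unique unitary U : H → H' such that U π(a) = π'(a) U for all a ∈ A and U ζ(s) = ζ'(s) for all s ∈ S. -/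
open scoped InnerProductSpace
open ContinuousLinearMap

namespace Stmt1

/-- Auxiliary: extend a generator correspondence preserving inner products to a
norm-preserving continuous linear map on the closure of the span. -/
lemma exists_clm_of_inner_eq {ι : Type*}
    {H : Type*} [NormedAddCommGroup H] [InnerProductSpace ℂ H] [CompleteSpace H]
    {H' : Type*} [NormedAddCommGroup H'] [InnerProductSpace ℂ H'] [CompleteSpace H']
    (g : ι → H) (g' : ι → H')
    (hgg : ∀ p q : ι, ⟪g p, g q⟫_ℂ = ⟪g' p, g' q⟫_ℂ)
    (hd : Dense ((Submodule.span ℂ (Set.range g) : Submodule ℂ H) : Set H)) :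
    ∃ U₀ : H →L[ℂ] H', (∀ p, U₀ (g p) = g' p) ∧ ∀ x, ‖U₀ x‖ = ‖x‖ := by
  classical
  set L : (ι →₀ ℂ) →ₗ[ℂ] H := Finsupp.linearCombination ℂ g with hL
  set L' : (ι →₀ ℂ) →ₗ[ℂ] H' := Finsupp.linearCombination ℂ g' with hL'
  have hinner : ∀ f f' : ι →₀ ℂ, ⟪L f, L f'⟫_ℂ = ⟪L' f, L' f'⟫_ℂ := by
    intro f f'
    rw [hL, hL', Finsupp.linearCombination_apply, Finsupp.linearCombination_apply,
      Finsupp.linearCombination_apply, Finsupp.linearCombination_apply,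
      Finsupp.sum, Finsupp.sum, Finsupp.sum, Finsupp.sum, sum_inner, sum_inner]
    refine Finset.sum_congr rfl fun p _ => ?_
    rw [inner_sum, inner_sum]
    refine Finset.sum_congr rfl fun q _ => ?_
    rw [inner_smul_left, inner_smul_left, inner_smul_right, inner_smul_right, hgg]
  have hnorm : ∀ f : ι →₀ ℂ, ‖L' f‖ = ‖L f‖ := by
    intro f
    rw [norm_eq_sqrt_re_inner (𝕜 := ℂ), norm_eq_sqrt_re_inner (𝕜 := ℂ), hinner]
  have hker : LinearMap.ker L ≤ LinearMap.ker L' := by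
    intro f hf
    rw [LinearMap.mem_ker] at hf ⊢
    rw [← norm_eq_zero, hnorm, hf, norm_zero]
  -- the linear map on the range of `L`
  set V : (LinearMap.range L) →ₗ[ℂ] H' :=
    ((LinearMap.ker L).liftQ L' hker) ∘ₗ (L.quotKerEquivRange.symm : _ →ₗ[ℂ] _) with hV
  have hVL : ∀ f : ι →₀ ℂ, V ⟨L f, LinearMap.mem_range_self L f⟩ = L' f := by
    intro f
    rw [hV]
    simp only [LinearMap.coe_comp, Function.comp_apply, LinearEquiv.coe_coe]
    rw [L.quotKerEquivRange_symm_apply_image, Submodule.mkQ_apply, Submodule.liftQ_apply]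
  have hVnorm : ∀ x : LinearMap.range L, ‖V x‖ = ‖x‖ := by
    rintro ⟨x, hx⟩
    obtain ⟨f, rfl⟩ := hx
    rw [hVL, hnorm]
    rfl
  have hViso : Isometry V := AddMonoidHomClass.isometry_of_norm V hVnorm
  set Vc : (LinearMap.range L) →L[ℂ] H' := ⟨V, hViso.continuous⟩ with hVc
  have hsub_iso : Isometry ((LinearMap.range L).subtypeL : LinearMap.range L → H) :=
    isometry_subtype_coe
  have hrange : LinearMap.range L = Submodule.span ℂ (Set.range g) := by
    rw [hL, Finsupp.range_linearCombination]
  have hdr : DenseRange ((LinearMap.range L).subtypeL : LinearMap.range L → H) := by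
    have : Set.range ((LinearMap.range L).subtypeL : LinearMap.range L → H)
        = (LinearMap.range L : Set H) := Subtype.range_coe
    rw [DenseRange, this, hrange]
    exact hd
  set U₀ : H →L[ℂ] H' := Vc.extend (LinearMap.range L).subtypeL
    with hU₀
  have hU₀L : ∀ f : ι →₀ ℂ, U₀ (L f) = L' f := by
    intro f
    have := Vc.extend_eq hdr hsub_iso.isUniformInducing
      ⟨L f, LinearMap.mem_range_self L f⟩
    rw [hU₀]
    simpa [hVc, hVL f] using this
  refine ⟨U₀, ?_, ?_⟩
  · intro p
    have h1 : L (Finsupp.single p 1) = g p := by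
      rw [hL, Finsupp.linearCombination_single, one_smul]
    have h2 : L' (Finsupp.single p 1) = g' p := by
      rw [hL', Finsupp.linearCombination_single, one_smul]
    rw [← h1, hU₀L, h2]
  · -- norm preservation, by density
    have hdL : Dense ((LinearMap.range L : Submodule ℂ H) : Set H) := by rw [hrange]; exact hd
    have heq : Set.EqOn (fun x : H => ‖U₀ x‖) (fun x : H => ‖x‖)
        ((LinearMap.range L : Submodule ℂ H) : Set H) := by
      rintro x ⟨f, rfl⟩
      simp only
      rw [hU₀L, hnorm]
    have := Continuous.ext_on hdL (U₀.continuous.norm) continuous_norm heq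
    intro x
    exact congrFun this x



lemma span_dense_clm_ext {ι E F : Type*} [NormedAddCommGroup E] [NormedSpace ℂ E]
    [NormedAddCommGroup F] [NormedSpace ℂ F] (g : ι → E)
    (hd : Dense ((Submodule.span ℂ (Set.range g) : Submodule ℂ E) : Set E))
    (T₁ T₂ : E →L[ℂ] F) (h : ∀ p, T₁ (g p) = T₂ (g p)) (x : E) : T₁ x = T₂ x := by
  have hsp : ∀ y ∈ Submodule.span ℂ (Set.range g), T₁ y = T₂ y := by
    intro y hy
    induction hy using Submodule.span_induction with
    | mem y hy => obtain ⟨p, rfl⟩ := hy; exact h p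
    | zero => simp
    | add y z _ _ hy hz => simp [hy, hz]
    | smul c y _ hy => simp [hy]
  exact congrFun (Continuous.ext_on hd T₁.continuous T₂.continuous hsp) x

theorem minimal_dilation_unique
    {A : Type*} [NonUnitalCStarAlgebra A]
    {H₀ : Type*} [NormedAddCommGroup H₀] [InnerProductSpace ℂ H₀] [CompleteSpace H₀]
    {S : Type*}
    (k : S × S → A →L[ℂ] H₀ →L[ℂ] H₀)
    {H : Type*} [NormedAddCommGroup H] [InnerProductSpace ℂ H] [CompleteSpace H]
    {H' : Type*} [NormedAddCommGroup H'] [InnerProductSpace ℂ H'] [CompleteSpace H']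
    (π : A →⋆ₙₐ[ℂ] (H →L[ℂ] H)) (π' : A →⋆ₙₐ[ℂ] (H' →L[ℂ] H'))
    (ζ : S → H₀ →L[ℂ] H) (ζ' : S → H₀ →L[ℂ] H')
    -- `π` and `π'` are nondegenerate representations
    (hπ : (Submodule.span ℂ {y : H | ∃ (a : A) (x : H), π a x = y}).topologicalClosure = ⊤)
    (hπ' : (Submodule.span ℂ {y : H' | ∃ (a : A) (x : H'), π' a x = y}).topologicalClosure = ⊤)
    -- both triples dilate the kernel `k`
    (hdil : ∀ (s t : S) (a : A),
      k (s, t) a = (ContinuousLinearMap.adjoint (ζ s)).comp ((π a).comp (ζ t)))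
    (hdil' : ∀ (s t : S) (a : A),
      k (s, t) a = (ContinuousLinearMap.adjoint (ζ' s)).comp ((π' a).comp (ζ' t)))
    -- both dilations are minimal
    (hmin : (Submodule.span ℂ
      {y : H | ∃ (a : A) (s : S) (ξ : H₀), π a (ζ s ξ) = y}).topologicalClosure = ⊤)
    (hmin' : (Submodule.span ℂ
      {y : H' | ∃ (a : A) (s : S) (ξ : H₀), π' a (ζ' s ξ) = y}).topologicalClosure = ⊤) :
    ∃! U : H ≃ₗᵢ[ℂ] H',
      (∀ (a : A) (x : H), U (π a x) = π' a (U x)) ∧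
        ∀ (s : S) (ξ : H₀), U (ζ s ξ) = ζ' s ξ := by
  classical
  set g : A × S × H₀ → H := fun p => π p.1 (ζ p.2.1 p.2.2) with hg
  set g' : A × S × H₀ → H' := fun p => π' p.1 (ζ' p.2.1 p.2.2) with hg'
  -- adjoints of the represented elements
  have hstar : ∀ (a : A) (x y : H), ⟪π a x, y⟫_ℂ = ⟪x, π (star a) y⟫_ℂ := by
    intro a x y
    rw [map_star, ContinuousLinearMap.star_eq_adjoint, ContinuousLinearMap.adjoint_inner_right]
  have hstar' : ∀ (a : A) (x y : H'), ⟪π' a x, y⟫_ℂ = ⟪x, π' (star a) y⟫_ℂ := by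
    intro a x y
    rw [map_star, ContinuousLinearMap.star_eq_adjoint, ContinuousLinearMap.adjoint_inner_right]
  have hker : ∀ (s t : S) (c : A) (ξ η : H₀),
      ⟪ζ s ξ, π c (ζ t η)⟫_ℂ = ⟪ξ, (k (s, t) c) η⟫_ℂ := by
    intro s t c ξ η
    rw [hdil s t c, ContinuousLinearMap.comp_apply, ContinuousLinearMap.comp_apply,
      ContinuousLinearMap.adjoint_inner_right]
  have hker' : ∀ (s t : S) (c : A) (ξ η : H₀),
      ⟪ζ' s ξ, π' c (ζ' t η)⟫_ℂ = ⟪ξ, (k (s, t) c) η⟫_ℂ := by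
    intro s t c ξ η
    rw [hdil' s t c, ContinuousLinearMap.comp_apply, ContinuousLinearMap.comp_apply,
      ContinuousLinearMap.adjoint_inner_right]
  have hgval : ∀ p q : A × S × H₀,
      ⟪g p, g q⟫_ℂ = ⟪p.2.2, (k (p.2.1, q.2.1) (star p.1 * q.1)) q.2.2⟫_ℂ := by
    rintro ⟨a, s, ξ⟩ ⟨b, t, η⟩
    show ⟪π a (ζ s ξ), π b (ζ t η)⟫_ℂ = _
    rw [hstar, ← ContinuousLinearMap.mul_apply, ← map_mul, hker]
  have hgval' : ∀ p q : A × S × H₀,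
      ⟪g' p, g' q⟫_ℂ = ⟪p.2.2, (k (p.2.1, q.2.1) (star p.1 * q.1)) q.2.2⟫_ℂ := by
    rintro ⟨a, s, ξ⟩ ⟨b, t, η⟩
    show ⟪π' a (ζ' s ξ), π' b (ζ' t η)⟫_ℂ = _
    rw [hstar', ← ContinuousLinearMap.mul_apply, ← map_mul, hker']
  have hgg : ∀ p q : A × S × H₀, ⟪g p, g q⟫_ℂ = ⟪g' p, g' q⟫_ℂ := by
    intro p q; rw [hgval, hgval']
  -- identification of the span sets
  have hset : {y : H | ∃ (a : A) (s : S) (ξ : H₀), π a (ζ s ξ) = y} = Set.range g := by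
    ext y
    constructor
    · rintro ⟨a, s, ξ, rfl⟩; exact ⟨(a, s, ξ), rfl⟩
    · rintro ⟨⟨a, s, ξ⟩, rfl⟩; exact ⟨a, s, ξ, rfl⟩
  have hset' : {y : H' | ∃ (a : A) (s : S) (ξ : H₀), π' a (ζ' s ξ) = y} = Set.range g' := by
    ext y
    constructor
    · rintro ⟨a, s, ξ, rfl⟩; exact ⟨(a, s, ξ), rfl⟩
    · rintro ⟨⟨a, s, ξ⟩, rfl⟩; exact ⟨a, s, ξ, rfl⟩
  have hd : Dense ((Submodule.span ℂ (Set.range g) : Submodule ℂ H) : Set H) := by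
    rw [← hset]
    exact Submodule.dense_iff_topologicalClosure_eq_top.mpr hmin
  have hd' : Dense ((Submodule.span ℂ (Set.range g') : Submodule ℂ H') : Set H') := by
    rw [← hset']
    exact Submodule.dense_iff_topologicalClosure_eq_top.mpr hmin'
  obtain ⟨U₀, hU₀g, hU₀n⟩ := exists_clm_of_inner_eq g g' hgg hd
  obtain ⟨U₁, hU₁g, hU₁n⟩ := exists_clm_of_inner_eq g' g (fun p q => (hgg p q).symm) hd'
  -- U₁ is inverse to U₀
  have h10 : ∀ x : H, U₁ (U₀ x) = x := by
    intro x
    refine span_dense_clm_ext g hd (U₁.comp U₀) (ContinuousLinearMap.id ℂ H) (fun p => ?_) x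
    simp [hU₀g, hU₁g]
  have h01 : ∀ x : H', U₀ (U₁ x) = x := by
    intro x
    refine span_dense_clm_ext g' hd' (U₀.comp U₁) (ContinuousLinearMap.id ℂ H') (fun p => ?_) x
    simp [hU₀g, hU₁g]
  -- assemble the unitary
  set U : H ≃ₗᵢ[ℂ] H' :=
    { toLinearEquiv := LinearEquiv.ofLinear (U₀ : H →ₗ[ℂ] H') (U₁ : H' →ₗ[ℂ] H)
        (by ext x; exact h01 x) (by ext x; exact h10 x)
      norm_map' := hU₀n } with hU
  have hUapp : ∀ x : H, U x = U₀ x := fun _ => rfl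
  have hUsymm : ∀ x : H', U.symm x = U₁ x := fun _ => rfl
  refine ⟨U, ⟨?_, ?_⟩, ?_⟩
  · -- intertwining with the representations
    intro a x
    rw [hUapp, hUapp]
    refine span_dense_clm_ext g hd (U₀.comp (π a)) ((π' a).comp U₀) (fun p => ?_) x
    rcases p with ⟨b, s, ξ⟩
    have h1 : π a (g (b, s, ξ)) = g (a * b, s, ξ) := by
      simp only [hg, ← ContinuousLinearMap.mul_apply, ← map_mul]
    have h2 : π' a (g' (b, s, ξ)) = g' (a * b, s, ξ) := by
      simp only [hg', ← ContinuousLinearMap.mul_apply, ← map_mul]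
    simp only [ContinuousLinearMap.comp_apply, h1, hU₀g, h2]
  · -- U maps ζ to ζ'
    intro s ξ
    rw [hUapp]
    refine ext_inner_right ℂ fun v => ?_
    have := span_dense_clm_ext g' hd' (innerSL ℂ (U₀ (ζ s ξ))) (innerSL ℂ (ζ' s ξ)) ?_ v
    · exact this
    rintro ⟨b, t, η⟩
    have e1 : ⟪U₀ (ζ s ξ), g' (b, t, η)⟫_ℂ = ⟪ζ s ξ, g (b, t, η)⟫_ℂ := by
      have hg'U : g' (b, t, η) = U₀ (g (b, t, η)) := (hU₀g _).symm
      rw [hg'U, ← hUapp, ← hUapp, LinearIsometryEquiv.inner_map_map]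
    have e2 : ⟪ζ s ξ, g (b, t, η)⟫_ℂ = ⟪ξ, (k (s, t) b) η⟫_ℂ := hker s t b ξ η
    have e3 : ⟪ζ' s ξ, g' (b, t, η)⟫_ℂ = ⟪ξ, (k (s, t) b) η⟫_ℂ := hker' s t b ξ η
    simp only [innerSL_apply_apply]
    rw [e1, e2, e3]
  · -- uniqueness
    intro W ⟨hW₁, hW₂⟩
    refine LinearIsometryEquiv.ext fun x => ?_
    have hWg : ∀ p, W.toLinearIsometry.toContinuousLinearMap (g p) = U₀ (g p) := by
      rintro ⟨b, t, η⟩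
      have : W (π b (ζ t η)) = π' b (ζ' t η) := by rw [hW₁, hW₂]
      rw [hU₀g (b, t, η)]
      simpa [hg, hg'] using this
    exact span_dense_clm_ext g hd W.toLinearIsometry.toContinuousLinearMap U₀ hWg x

end Stmt1
end

section
/- Let A be a unital C*-algebra, B a C*-algebra, S a set, and k : S × S → B(A,B) a positive-definite kernel. Suppose (E, ζ) and (E', ζ') are two minimal pairs representing k: E and E' are C*-correspondences from A to B on which the unit of A acts as the identity, ζ : S → E and ζ' : S → E' satisfy k(s,t)(a) = ⟨ζ(s), a·ζ(t)⟩ = ⟨ζ'(s), a·ζ'(t)⟩ for all s, t ∈ S, a ∈ A, and the closed linear spans of {a·ζ(s)·b : a ∈ A, s ∈ S, b ∈ B} and {a·ζ'(s)·b : a ∈ A, s ∈ S, b ∈ B} equal E and E' respectively. Then there is a unique map U : E → E' which is bijective, ℂ-linear, commutes with the left A-actions and the right B-actions, preserves the B-valued inner products (⟨Uξ, Uη⟩ = ⟨ξ, η⟩ for all ξ, η ∈ E), and satisfies U ζ(s) = ζ'(s) for all s ∈ S. -/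
/-!
STATEMENT 4: Uniqueness (up to a unique unitary, i.e. a bijective ℂ-linear,
`A`-`B`-bimodule, inner-product preserving map) of minimal pairs `(E, ζ)` representing
a positive-definite kernel `k : S × S → B(A,B)` over a unital C*-algebra `A`.

Positivity in `Matₙ(B)` (and of inner products) is encoded via the equivalent
C*-characterisation `M = N* N`.
-/

namespace Stmt4

universe u v

/-- A C*-correspondence from `A` to a C*-algebra `C` whose norm function is `nC`. -/
structure Correspondence (A : Type u) (C : Type v) [NonUnitalRing A] [StarRing A]
    [NonUnitalRing C] [StarRing C] [Module ℂ C] (nC : C → ℝ) where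
  /-- the underlying space -/
  carrier : Type (max u v)
  [instNormed : NormedAddCommGroup carrier]
  [instModule : NormedSpace ℂ carrier]
  [instComplete : CompleteSpace carrier]
  /-- the left action of `A` -/
  lsmul : A → carrier → carrier
  /-- the right action of `C` -/
  rsmul : carrier → C → carrier
  /-- the `C`-valued inner product -/
  ip : carrier → carrier → C
  ip_add_right : ∀ ξ ζ η, ip ξ (ζ + η) = ip ξ ζ + ip ξ η
  ip_smul_right : ∀ (c : ℂ) ξ ζ, ip ξ (c • ζ) = c • ip ξ ζ
  ip_rsmul_right : ∀ ξ ζ b, ip ξ (rsmul ζ b) = ip ξ ζ * b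
  ip_star : ∀ ξ ζ, star (ip ξ ζ) = ip ζ ξ
  ip_nonneg : ∀ ξ, ∃ c, ip ξ ξ = star c * c
  ip_definite : ∀ ξ, ip ξ ξ = 0 → ξ = 0
  norm_eq : ∀ ξ, ‖ξ‖ = Real.sqrt (nC (ip ξ ξ))
  rsmul_add_left : ∀ ξ ζ b, rsmul (ξ + ζ) b = rsmul ξ b + rsmul ζ b
  rsmul_add_right : ∀ ξ b b', rsmul ξ (b + b') = rsmul ξ b + rsmul ξ b'
  rsmul_rsmul : ∀ ξ b b', rsmul (rsmul ξ b) b' = rsmul ξ (b * b')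
  lsmul_add : ∀ a ξ ζ, lsmul a (ξ + ζ) = lsmul a ξ + lsmul a ζ
  lsmul_smul : ∀ a (c : ℂ) ξ, lsmul a (c • ξ) = c • lsmul a ξ
  lsmul_add_left : ∀ a a' ξ, lsmul (a + a') ξ = lsmul a ξ + lsmul a' ξ
  lsmul_lsmul : ∀ a a' ξ, lsmul (a * a') ξ = lsmul a (lsmul a' ξ)
  lsmul_bounded : ∀ a, ∃ M : ℝ, ∀ ξ, ‖lsmul a ξ‖ ≤ M * ‖ξ‖
  ip_lsmul : ∀ a ξ ζ, ip (lsmul a ξ) ζ = ip ξ (lsmul (star a) ζ)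
  lsmul_rsmul : ∀ a ξ b, lsmul a (rsmul ξ b) = rsmul (lsmul a ξ) b
  nondegenerate : closure (↑(Submodule.span ℂ {y : carrier | ∃ a ξ, lsmul a ξ = y}) : Set carrier)
    = Set.univ

attribute [instance] Correspondence.instNormed Correspondence.instModule
  Correspondence.instComplete

variable {A : Type u} [CStarAlgebra A] {B : Type v} [NonUnitalCStarAlgebra B] {S : Type*}

/-- `k` is positive-definite: each matrix `[k(sᵢ,sⱼ)(aᵢ* aⱼ)]` is a positive element of
the C*-algebra `Matₙ(B)`. -/
def PosDefKernel (k : S × S → A →L[ℂ] B) : Prop :=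
  ∀ (n : ℕ) (s : Fin n → S) (a : Fin n → A),
    ∃ N : Matrix (Fin n) (Fin n) B,
      (Matrix.of fun i j => k (s i, s j) (star (a i) * a j)) = star N * N

/-- The pair `(E, ζ)` represents the kernel `k` (with the unit of `A` acting as the
identity on `E`). -/
def Represents (k : S × S → A →L[ℂ] B) (E : Correspondence A B fun b => ‖b‖)
    (ζ : S → E.carrier) : Prop :=
  (∀ ξ : E.carrier, E.lsmul 1 ξ = ξ) ∧
    ∀ (s t : S) (a : A), k (s, t) a = E.ip (ζ s) (E.lsmul a (ζ t))

/-- The pair `(E, ζ)` is minimal: `{a·ζ(s)·b}` has dense linear span in `E`. -/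
def Minimal (E : Correspondence A B fun b => ‖b‖) (ζ : S → E.carrier) : Prop :=
  closure (↑(Submodule.span ℂ
      {y : E.carrier | ∃ (a : A) (s : S) (b : B), E.rsmul (E.lsmul a (ζ s)) b = y})
    : Set E.carrier) = Set.univ

namespace Correspondence

variable {A : Type u} [CStarAlgebra A] {B : Type v} [NonUnitalCStarAlgebra B] {S : Type*}
variable (E : Correspondence A B fun b => ‖b‖)

lemma ip_zero_right (ξ : E.carrier) : E.ip ξ 0 = 0 := by
  have h := E.ip_add_right ξ 0 0
  rw [add_zero] at h
  exact left_eq_add.mp h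

lemma ip_zero_left (ξ : E.carrier) : E.ip 0 ξ = 0 := by
  rw [← E.ip_star, E.ip_zero_right, star_zero]

lemma ip_add_left (ξ ζ η : E.carrier) : E.ip (ξ + ζ) η = E.ip ξ η + E.ip ζ η := by
  rw [← E.ip_star, E.ip_add_right, star_add, E.ip_star, E.ip_star]

lemma ip_smul_left (c : ℂ) (ξ η : E.carrier) :
    E.ip (c • ξ) η = (star c) • E.ip ξ η := by
  rw [← E.ip_star, E.ip_smul_right, star_smul, E.ip_star]

lemma ip_neg_right (ξ η : E.carrier) : E.ip ξ (-η) = - E.ip ξ η := by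
  rw [← neg_one_smul ℂ η, E.ip_smul_right, neg_one_smul]

lemma ip_neg_left (ξ η : E.carrier) : E.ip (-ξ) η = - E.ip ξ η := by
  rw [← E.ip_star, E.ip_neg_right, star_neg, E.ip_star]

lemma ip_sub_right (ξ ζ η : E.carrier) : E.ip ξ (ζ - η) = E.ip ξ ζ - E.ip ξ η := by
  rw [sub_eq_add_neg, E.ip_add_right, E.ip_neg_right, sub_eq_add_neg]

lemma ip_sub_left (ξ ζ η : E.carrier) : E.ip (ξ - ζ) η = E.ip ξ η - E.ip ζ η := by
  rw [sub_eq_add_neg, E.ip_add_left, E.ip_neg_left, sub_eq_add_neg]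

lemma ip_real_smul_right (r : ℝ) (ξ η : E.carrier) : E.ip ξ (r • η) = r • E.ip ξ η := by
  rw [← Complex.coe_smul, E.ip_smul_right, Complex.coe_smul]

lemma ip_real_smul_left (r : ℝ) (ξ η : E.carrier) : E.ip (r • ξ) η = r • E.ip ξ η := by
  rw [← Complex.coe_smul, E.ip_smul_left, ← Complex.coe_smul (E := B)]
  norm_num

lemma ip_rsmul_left (ξ η : E.carrier) (b : B) :
    E.ip (E.rsmul ξ b) η = star b * E.ip ξ η := by
  rw [← E.ip_star, E.ip_rsmul_right, star_mul, E.ip_star]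

lemma norm_ip_self (ξ : E.carrier) : ‖E.ip ξ ξ‖ = ‖ξ‖ * ‖ξ‖ := by
  have h : ‖ξ‖ = Real.sqrt ‖E.ip ξ ξ‖ := E.norm_eq ξ
  rw [h, Real.mul_self_sqrt (norm_nonneg (E.ip ξ ξ))]

lemma rsmul_zero_left (b : B) : E.rsmul 0 b = 0 := by
  have h := E.rsmul_add_left 0 0 b
  rw [add_zero] at h
  exact left_eq_add.mp h

lemma lsmul_zero_right (a : A) : E.lsmul a 0 = 0 := by
  simpa using E.lsmul_smul a 0 0

lemma rsmul_smul_left (c : ℂ) (ξ : E.carrier) (b : B) :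
    E.rsmul (c • ξ) b = c • E.rsmul ξ b := by
  have key : ∀ η, E.ip η (E.rsmul (c • ξ) b) = E.ip η (c • E.rsmul ξ b) := by
    intro η
    rw [E.ip_rsmul_right, E.ip_smul_right, E.ip_smul_right, E.ip_rsmul_right, smul_mul_assoc]
  have hd : E.ip (E.rsmul (c • ξ) b - c • E.rsmul ξ b) (E.rsmul (c • ξ) b - c • E.rsmul ξ b)
      = 0 := by
    rw [E.ip_sub_right, key, sub_self]
  exact sub_eq_zero.mp (E.ip_definite _ hd)

lemma ip_rsmul_self (ξ : E.carrier) (b : B) :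
    E.ip (E.rsmul ξ b) (E.rsmul ξ b) = star b * (E.ip ξ ξ * b) := by
  rw [E.ip_rsmul_left, E.ip_rsmul_right]

lemma norm_rsmul_le (ξ : E.carrier) (b : B) : ‖E.rsmul ξ b‖ ≤ ‖ξ‖ * ‖b‖ := by
  have h2 : ‖E.rsmul ξ b‖ = Real.sqrt ‖star b * (E.ip ξ ξ * b)‖ := by
    have h : ‖E.rsmul ξ b‖ = Real.sqrt ‖E.ip (E.rsmul ξ b) (E.rsmul ξ b)‖ := E.norm_eq _
    rw [h, E.ip_rsmul_self]
  have h3 : ‖star b * (E.ip ξ ξ * b)‖ ≤ (‖ξ‖ * ‖b‖) * (‖ξ‖ * ‖b‖) := by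
    calc ‖star b * (E.ip ξ ξ * b)‖ ≤ ‖star b‖ * ‖E.ip ξ ξ * b‖ := norm_mul_le _ _
      _ ≤ ‖star b‖ * (‖E.ip ξ ξ‖ * ‖b‖) := by
          gcongr
          exact norm_mul_le _ _
      _ = ‖b‖ * (‖ξ‖ * ‖ξ‖ * ‖b‖) := by rw [norm_star, E.norm_ip_self]
      _ = (‖ξ‖ * ‖b‖) * (‖ξ‖ * ‖b‖) := by ring
  rw [h2]
  calc Real.sqrt ‖star b * (E.ip ξ ξ * b)‖ ≤ Real.sqrt ((‖ξ‖ * ‖b‖) * (‖ξ‖ * ‖b‖)) :=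
        Real.sqrt_le_sqrt h3
    _ = ‖ξ‖ * ‖b‖ := Real.sqrt_mul_self (by positivity)

/-- The left action as a continuous linear map. -/
noncomputable def lsmulL (a : A) : E.carrier →L[ℂ] E.carrier :=
  LinearMap.mkContinuousOfExistsBound
    { toFun := E.lsmul a
      map_add' := E.lsmul_add a
      map_smul' := fun c ξ => E.lsmul_smul a c ξ }
    (E.lsmul_bounded a)

@[simp] lemma lsmulL_apply (a : A) (ξ : E.carrier) : E.lsmulL a ξ = E.lsmul a ξ := rfl

/-- The right action as a continuous linear map. -/
noncomputable def rsmulL (b : B) : E.carrier →L[ℂ] E.carrier :=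
  LinearMap.mkContinuous
    { toFun := fun ξ => E.rsmul ξ b
      map_add' := fun ξ ζ => E.rsmul_add_left ξ ζ b
      map_smul' := fun c ξ => E.rsmul_smul_left c ξ b }
    ‖b‖ (fun ξ => by rw [mul_comm]; exact E.norm_rsmul_le ξ b)

@[simp] lemma rsmulL_apply (b : B) (ξ : E.carrier) : E.rsmulL b ξ = E.rsmul ξ b := rfl

lemma ip_self_star (ξ : E.carrier) : star (E.ip ξ ξ) = E.ip ξ ξ := E.ip_star ξ ξ

/-- Cauchy–Schwarz for the `B`-valued inner product. -/
lemma norm_ip_le (ξ η : E.carrier) : ‖E.ip ξ η‖ ≤ ‖ξ‖ * ‖η‖ := by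
  by_cases hx : ξ = 0
  · simp [hx, E.ip_zero_left]
  letI : PartialOrder (Unitization ℂ B) := CStarAlgebra.spectralOrder _
  haveI : StarOrderedRing (Unitization ℂ B) := CStarAlgebra.spectralOrderedRing _
  have hsmul : ∀ (r : ℝ), 0 ≤ r → ∀ p q : Unitization ℂ B, p ≤ q → r • p ≤ r • q := by
    intro r hr p q hpq
    have h := star_left_conjugate_le_conjugate hpq ((Real.sqrt r) • (1 : Unitization ℂ B))
    have hst : star ((Real.sqrt r) • (1 : Unitization ℂ B)) = (Real.sqrt r) • 1 := by
      rw [star_smul, star_trivial, star_one]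
    rw [hst] at h
    have hconj : ∀ x : Unitization ℂ B,
        (Real.sqrt r • (1 : Unitization ℂ B)) * x * (Real.sqrt r • 1) = r • x := by
      intro x
      rw [smul_mul_assoc, one_mul, mul_smul_comm, mul_one, smul_smul,
        Real.mul_self_sqrt hr]
    rwa [hconj, hconj] at h
  have hxn : 0 < ‖ξ‖ := norm_pos_iff.mpr hx
  set c : B := E.ip ξ η with hc
  set t : ℝ := (‖ξ‖ * ‖ξ‖)⁻¹ with htdef
  have ht : 0 < t := by positivity
  set w : E.carrier := E.rsmul ξ c with hw
  set z : E.carrier := t • w - η with hz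
  have hww : E.ip w w = star c * (E.ip ξ ξ * c) := E.ip_rsmul_self ξ c
  have hwy : E.ip w η = star c * c := by
    rw [hw, E.ip_rsmul_left, ← hc]
  have hyw : E.ip η w = star c * c := by
    rw [hw, E.ip_rsmul_right, ← E.ip_star ξ η, ← hc]
  have hzz : E.ip z z = t • (t • E.ip w w - E.ip η w) - (t • E.ip w η - E.ip η η) := by
    simp only [hz, E.ip_sub_right, E.ip_sub_left, E.ip_real_smul_right,
      E.ip_real_smul_left, smul_sub]
  rw [hww, hwy, hyw] at hzz
  -- move to the unitization
  have hpos : (0 : Unitization ℂ B) ≤ (E.ip z z : Unitization ℂ B) := by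
    obtain ⟨d, hd⟩ := E.ip_nonneg z
    rw [hd, Unitization.inr_mul, Unitization.inr_star]
    exact star_mul_self_nonneg _
  set C : Unitization ℂ B := (c : Unitization ℂ B) with hC
  set X : Unitization ℂ B := ((E.ip ξ ξ : B) : Unitization ℂ B) with hX
  set Y : Unitization ℂ B := ((E.ip η η : B) : Unitization ℂ B) with hY
  set Q : Unitization ℂ B := star C * C with hQ
  have hcast : (E.ip z z : Unitization ℂ B)
      = t • (t • (star C * (X * C)) - Q) - (t • Q - Y) := by
    rw [hzz]
    push_cast [Unitization.inr_smul, Unitization.inr_mul, Unitization.inr_star,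
      Unitization.inr_add, Unitization.inr_sub]
    rfl
  have hXsa : IsSelfAdjoint X :=
    (show IsSelfAdjoint (E.ip ξ ξ) from E.ip_self_star ξ).inr ℂ
  have hXnorm : ‖X‖ = ‖ξ‖ * ‖ξ‖ := by
    rw [hX, Unitization.norm_inr, E.norm_ip_self]
  have hconjle : star C * (X * C) ≤ (‖ξ‖ * ‖ξ‖) • Q := by
    have h := CStarAlgebra.star_left_conjugate_le_norm_smul (a := C) (b := X) hXsa
    rw [hXnorm] at h
    calc star C * (X * C) = star C * X * C := by rw [mul_assoc]
      _ ≤ (‖ξ‖ * ‖ξ‖) • (star C * C) := h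
      _ = (‖ξ‖ * ‖ξ‖) • Q := rfl
  have hQpos : (0 : Unitization ℂ B) ≤ Q := star_mul_self_nonneg C
  -- rearrange: from 0 ≤ ip z z, get t • Q ≤ Y
  have hmain : t • Q ≤ Y := by
    have h1 : t • Q - Y ≤ t • (t • (star C * (X * C)) - Q) := by
      have h0 := hpos
      rw [hcast] at h0
      exact sub_nonneg.mp h0
    have h2 : t • (t • (star C * (X * C)) - Q) ≤ t • (t • ((‖ξ‖ * ‖ξ‖) • Q) - Q) := by
      apply hsmul t ht.le
      apply sub_le_sub_right
      exact hsmul t ht.le _ _ hconjle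
    have h3 : t • (t • ((‖ξ‖ * ‖ξ‖) • Q) - Q) = 0 := by
      rw [smul_smul, htdef, inv_mul_cancel₀ (by positivity), one_smul, sub_self, smul_zero]
    have h4 : t • Q - Y ≤ 0 := le_trans h1 (h2.trans_eq h3)
    exact sub_nonpos.mp h4
  have hQnorm : ‖Q‖ = ‖c‖ * ‖c‖ := by
    rw [hQ, hC, ← Unitization.inr_star, ← Unitization.inr_mul, Unitization.norm_inr,
      CStarRing.norm_star_mul_self]
  have hYnorm : ‖Y‖ = ‖η‖ * ‖η‖ := by rw [hY, Unitization.norm_inr, E.norm_ip_self]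
  have hnorm := CStarAlgebra.norm_le_norm_of_nonneg_of_le
    (hsmul t ht.le _ _ hQpos |>.trans_eq' (smul_zero t)) hmain
  rw [norm_smul, Real.norm_of_nonneg ht.le, hQnorm, hYnorm] at hnorm
  -- now: t * (‖c‖ * ‖c‖) ≤ ‖η‖ * ‖η‖
  have hfinal : ‖c‖ * ‖c‖ ≤ (‖ξ‖ * ‖η‖) * (‖ξ‖ * ‖η‖) := by
    have ht' : t * (‖ξ‖ * ‖ξ‖) = 1 := inv_mul_cancel₀ (by positivity)
    have h5 := mul_le_mul_of_nonneg_left hnorm (mul_pos hxn hxn).le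
    calc ‖c‖ * ‖c‖ = (‖ξ‖ * ‖ξ‖) * (t * (‖c‖ * ‖c‖)) := by
          rw [← mul_assoc, mul_comm (‖ξ‖ * ‖ξ‖) t, ht', one_mul]
      _ ≤ (‖ξ‖ * ‖ξ‖) * (‖η‖ * ‖η‖) := h5
      _ = (‖ξ‖ * ‖η‖) * (‖ξ‖ * ‖η‖) := by ring
  calc ‖E.ip ξ η‖ = Real.sqrt (‖c‖ * ‖c‖) := (Real.sqrt_mul_self (norm_nonneg c)).symm
    _ ≤ Real.sqrt ((‖ξ‖ * ‖η‖) * (‖ξ‖ * ‖η‖)) := Real.sqrt_le_sqrt hfinal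
    _ = ‖ξ‖ * ‖η‖ := Real.sqrt_mul_self (by positivity)
/-- The inner product as a real-bilinear continuous map. -/
noncomputable def ipL : E.carrier →L[ℝ] E.carrier →L[ℝ] B :=
  LinearMap.mkContinuous₂
    { toFun := fun ξ =>
        { toFun := E.ip ξ
          map_add' := E.ip_add_right ξ
          map_smul' := fun r η => E.ip_real_smul_right r ξ η }
      map_add' := fun ξ ζ => LinearMap.ext fun η => E.ip_add_left ξ ζ η
      map_smul' := fun r ξ => LinearMap.ext fun η => E.ip_real_smul_left r ξ η }
    1 (fun ξ η => by simpa using E.norm_ip_le ξ η)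

@[simp] lemma ipL_apply (ξ η : E.carrier) : E.ipL ξ η = E.ip ξ η := rfl

lemma ip_continuous : Continuous (fun p : E.carrier × E.carrier => E.ip p.1 p.2) := by
  have h := E.ipL.continuous₂
  exact h

end Correspondence

/-- **Uniqueness of minimal representing pairs.** If `(E, ζ)` and `(E', ζ')` are minimal
pairs representing the same positive-definite kernel `k`, then there is a unique
bijective ℂ-linear map `U : E → E'` commuting with the left `A`- and right `B`-actions,
preserving the `B`-valued inner product, and with `U(ζ(s)) = ζ'(s)` for all `s`. -/
theorem minimal_pair_unique (k : S × S → A →L[ℂ] B) (hk : PosDefKernel k)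
    (E E' : Correspondence A B fun b => ‖b‖) (ζ : S → E.carrier) (ζ' : S → E'.carrier)
    (hE : Represents k E ζ) (hE' : Represents k E' ζ')
    (hmin : Minimal E ζ) (hmin' : Minimal E' ζ') :
    ∃! U : E.carrier → E'.carrier,
      Function.Bijective U ∧
        (∀ ξ η, U (ξ + η) = U ξ + U η) ∧
        (∀ (c : ℂ) ξ, U (c • ξ) = c • U ξ) ∧
        (∀ (a : A) ξ, U (E.lsmul a ξ) = E'.lsmul a (U ξ)) ∧
        (∀ ξ (b : B), U (E.rsmul ξ b) = E'.rsmul (U ξ) b) ∧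
        (∀ ξ η, E'.ip (U ξ) (U η) = E.ip ξ η) ∧
        ∀ s : S, U (ζ s) = ζ' s := by
  classical
  set v : A × S × B → E.carrier := fun p => E.rsmul (E.lsmul p.1 (ζ p.2.1)) p.2.2 with hv
  set v' : A × S × B → E'.carrier := fun p => E'.rsmul (E'.lsmul p.1 (ζ' p.2.1)) p.2.2 with hv'
  set Φ : ((A × S × B) →₀ ℂ) →ₗ[ℂ] E.carrier := Finsupp.linearCombination ℂ v with hΦ
  set Φ' : ((A × S × B) →₀ ℂ) →ₗ[ℂ] E'.carrier := Finsupp.linearCombination ℂ v' with hΦ'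
  have hsingleE : ∀ p c, Φ (Finsupp.single p c) = c • v p := by
    intro p c; rw [hΦ]; simp [Finsupp.linearCombination_single]
  have hsingleE' : ∀ p c, Φ' (Finsupp.single p c) = c • v' p := by
    intro p c; rw [hΦ']; simp [Finsupp.linearCombination_single]
  -- generator identities
  have hgen : ∀ (F : Correspondence A B fun b => ‖b‖) (z : S → F.carrier),
      Represents k F z → ∀ (a : A) (s : S) (b : B) (a' : A) (t : S) (b' : B),
      F.ip (F.rsmul (F.lsmul a (z s)) b) (F.rsmul (F.lsmul a' (z t)) b')
        = star b * (k (s, t) (star a * a') * b') := by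
    intro F z hF a s b a' t b'
    rw [F.ip_rsmul_left, F.ip_rsmul_right, F.ip_lsmul, ← F.lsmul_lsmul, ← hF.2]
  have hcross : ∀ (F : Correspondence A B fun b => ‖b‖) (z : S → F.carrier),
      Represents k F z → ∀ (s : S) (a : A) (t : S) (b : B),
      F.ip (z s) (F.rsmul (F.lsmul a (z t)) b) = k (s, t) a * b := by
    intro F z hF s a t b
    rw [F.ip_rsmul_right, ← hF.2]
  have hdiagF : ∀ (F : Correspondence A B fun b => ‖b‖) (z : S → F.carrier),
      Represents k F z → ∀ s t : S, F.ip (z s) (z t) = k (s, t) 1 := by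
    intro F z hF s t
    conv_lhs => rw [← hF.1 (z t)]
    rw [← hF.2]
  -- Gram identities
  have gramR : ∀ (p : A × S × B) (y : (A × S × B) →₀ ℂ),
      E.ip (v p) (Φ y) = E'.ip (v' p) (Φ' y) := by
    intro p y
    induction y using Finsupp.induction_linear with
    | zero => rw [map_zero, map_zero, E.ip_zero_right, E'.ip_zero_right]
    | add f g hf hg => rw [map_add, map_add, E.ip_add_right, E'.ip_add_right, hf, hg]
    | single q c =>
        rw [hsingleE, hsingleE', E.ip_smul_right, E'.ip_smul_right]
        congr 1
        obtain ⟨a, s, b⟩ := p; obtain ⟨a', t, b'⟩ := q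
        show E.ip (E.rsmul (E.lsmul a (ζ s)) b) (E.rsmul (E.lsmul a' (ζ t)) b')
          = E'.ip (E'.rsmul (E'.lsmul a (ζ' s)) b) (E'.rsmul (E'.lsmul a' (ζ' t)) b')
        rw [hgen E ζ hE, hgen E' ζ' hE']
  have gram : ∀ x y, E.ip (Φ x) (Φ y) = E'.ip (Φ' x) (Φ' y) := by
    intro x y
    induction x using Finsupp.induction_linear with
    | zero => rw [map_zero, map_zero, E.ip_zero_left, E'.ip_zero_left]
    | add f g hf hg => rw [map_add, map_add, E.ip_add_left, E'.ip_add_left, hf, hg]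
    | single p c => rw [hsingleE, hsingleE', E.ip_smul_left, E'.ip_smul_left, gramR]
  have crossR : ∀ (s : S) y, E.ip (ζ s) (Φ y) = E'.ip (ζ' s) (Φ' y) := by
    intro s y
    induction y using Finsupp.induction_linear with
    | zero => rw [map_zero, map_zero, E.ip_zero_right, E'.ip_zero_right]
    | add f g hf hg => rw [map_add, map_add, E.ip_add_right, E'.ip_add_right, hf, hg]
    | single q c =>
        rw [hsingleE, hsingleE', E.ip_smul_right, E'.ip_smul_right]
        congr 1
        obtain ⟨a, t, b⟩ := q
        show E.ip (ζ s) (E.rsmul (E.lsmul a (ζ t)) b)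
          = E'.ip (ζ' s) (E'.rsmul (E'.lsmul a (ζ' t)) b)
        rw [hcross E ζ hE, hcross E' ζ' hE']
  have crossL : ∀ (s : S) x, E.ip (Φ x) (ζ s) = E'.ip (Φ' x) (ζ' s) := by
    intro s x
    rw [← E.ip_star, ← E'.ip_star, crossR]
  -- norm identities
  have normEq : ∀ x, ‖Φ x‖ = ‖Φ' x‖ := by
    intro x
    have h1 : ‖Φ x‖ = Real.sqrt ‖E.ip (Φ x) (Φ x)‖ := E.norm_eq _
    have h2 : ‖Φ' x‖ = Real.sqrt ‖E'.ip (Φ' x) (Φ' x)‖ := E'.norm_eq _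
    rw [h1, h2, gram]
  have normShift : ∀ (s : S) x, ‖Φ x - ζ s‖ = ‖Φ' x - ζ' s‖ := by
    intro s x
    have h1 : ‖Φ x - ζ s‖ = Real.sqrt ‖E.ip (Φ x - ζ s) (Φ x - ζ s)‖ := E.norm_eq _
    have h2 : ‖Φ' x - ζ' s‖ = Real.sqrt ‖E'.ip (Φ' x - ζ' s) (Φ' x - ζ' s)‖ := E'.norm_eq _
    rw [h1, h2, E.ip_sub_left, E.ip_sub_right, E.ip_sub_right, E'.ip_sub_left,
      E'.ip_sub_right, E'.ip_sub_right, gram, crossR, crossL, hdiagF E ζ hE, hdiagF E' ζ' hE']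
  -- the range of Φ
  have hrangeSub : LinearMap.range Φ = Submodule.span ℂ
      {y : E.carrier | ∃ (a : A) (s : S) (b : B), E.rsmul (E.lsmul a (ζ s)) b = y} := by
    rw [hΦ, Finsupp.range_linearCombination]
    congr 1
    ext y
    constructor
    · rintro ⟨⟨a, s, b⟩, rfl⟩; exact ⟨a, s, b, rfl⟩
    · rintro ⟨a, s, b, h⟩; exact ⟨⟨a, s, b⟩, h⟩
  have hrangeSub' : LinearMap.range Φ' = Submodule.span ℂ
      {y : E'.carrier | ∃ (a : A) (s : S) (b : B), E'.rsmul (E'.lsmul a (ζ' s)) b = y} := by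
    rw [hΦ', Finsupp.range_linearCombination]
    congr 1
    ext y
    constructor
    · rintro ⟨⟨a, s, b⟩, rfl⟩; exact ⟨a, s, b, rfl⟩
    · rintro ⟨a, s, b, h⟩; exact ⟨⟨a, s, b⟩, h⟩
  set D := LinearMap.range Φ with hD
  have hdense : Dense (D : Set E.carrier) := by
    rw [dense_iff_closure_eq, hrangeSub]
    exact hmin
  -- the densely-defined unitary
  have hker : LinearMap.ker Φ ≤ LinearMap.ker Φ' := by
    intro x hx
    rw [LinearMap.mem_ker] at hx ⊢
    apply E'.ip_definite
    rw [← gram, hx, E.ip_zero_left]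
  set U₀ : D →ₗ[ℂ] E'.carrier :=
    ((LinearMap.ker Φ).liftQ Φ' hker).comp Φ.quotKerEquivRange.symm.toLinearMap with hU₀def
  have hU₀ : ∀ x, U₀ ⟨Φ x, LinearMap.mem_range_self Φ x⟩ = Φ' x := by
    intro x
    rw [hU₀def]
    simp only [LinearMap.comp_apply, LinearEquiv.coe_toLinearMap]
    rw [LinearMap.quotKerEquivRange_symm_apply_image]
    exact Submodule.liftQ_apply _ Φ' x (h := hker)
  have hU₀norm : ∀ d : D, ‖U₀ d‖ ≤ 1 * ‖d‖ := by
    rintro ⟨ξ, hξ⟩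
    obtain ⟨x, rfl⟩ := hξ
    have h1 : (⟨Φ x, LinearMap.mem_range_self Φ x⟩ : D) = ⟨Φ x, ⟨x, rfl⟩⟩ := rfl
    rw [← h1, hU₀ x, one_mul]
    exact (normEq x).symm.le
  set U₀c : D →L[ℂ] E'.carrier := U₀.mkContinuous 1 hU₀norm with hU₀c
  have hde : DenseRange (D.subtypeL : D →L[ℂ] E.carrier) := by
    have : DenseRange ((↑) : D → E.carrier) := denseRange_subtype_val.mpr hdense
    exact this
  have hui : IsUniformInducing (D.subtypeL : D →L[ℂ] E.carrier) :=
    isometry_subtype_coe.isUniformInducing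
  set Uc : E.carrier →L[ℂ] E'.carrier := U₀c.extend D.subtypeL with hUcdef
  have hUcD : ∀ d : D, Uc ↑d = U₀ d := by
    intro d
    have h := ContinuousLinearMap.extend_eq U₀c hde hui d
    exact h
  have hUc : ∀ x, Uc (Φ x) = Φ' x := by
    intro x
    have h := hUcD ⟨Φ x, LinearMap.mem_range_self Φ x⟩
    rw [hU₀ x] at h
    exact h
  -- Uc is isometric
  have hUcnorm : ∀ ξ : E.carrier, ‖Uc ξ‖ = ‖ξ‖ := by
    have hcont1 : Continuous fun ξ : E.carrier => ‖Uc ξ‖ := Uc.continuous.norm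
    have hcont2 : Continuous fun ξ : E.carrier => ‖ξ‖ := continuous_norm
    have heq : Set.EqOn (fun ξ => ‖Uc ξ‖) (fun ξ => ‖ξ‖) (D : Set E.carrier) := by
      intro ξ hξ
      obtain ⟨x, rfl⟩ := hξ
      show ‖Uc (Φ x)‖ = ‖Φ x‖
      rw [hUc x, normEq]
    exact fun ξ => congrFun (Continuous.ext_on hdense hcont1 hcont2 heq) ξ
  have hIso : Isometry Uc := AddMonoidHomClass.isometry_of_norm Uc hUcnorm
  -- surjectivity
  have hrangeclosed : IsClosed (Set.range Uc) := hIso.isClosedEmbedding.isClosed_range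
  have hsurj : Function.Surjective Uc := by
    intro η
    have h1 : (↑(Submodule.span ℂ {y : E'.carrier |
        ∃ (a : A) (s : S) (b : B), E'.rsmul (E'.lsmul a (ζ' s)) b = y}) : Set E'.carrier)
        ⊆ Set.range Uc := by
      rw [← hrangeSub']
      rintro η' ⟨x, rfl⟩
      exact ⟨Φ x, hUc x⟩
    have h2 : η ∈ closure (Set.range Uc) := by
      apply closure_mono h1
      rw [hmin']
      trivial
    rwa [hrangeclosed.closure_eq] at h2
  -- compatibility with the left action
  have hUlsmul : ∀ (a : A) (ξ : E.carrier), Uc (E.lsmul a ξ) = E'.lsmul a (Uc ξ) := by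
    intro a
    have hcont1 : Continuous fun ξ : E.carrier => Uc (E.lsmul a ξ) :=
      Uc.continuous.comp (E.lsmulL a).continuous
    have hcont2 : Continuous fun ξ : E.carrier => E'.lsmul a (Uc ξ) :=
      (E'.lsmulL a).continuous.comp Uc.continuous
    have heq : Set.EqOn (fun ξ : E.carrier => Uc (E.lsmul a ξ))
        (fun ξ : E.carrier => E'.lsmul a (Uc ξ)) (D : Set E.carrier) := by
      intro ξ hξ
      obtain ⟨x, rfl⟩ := hξ
      show Uc (E.lsmul a (Φ x)) = E'.lsmul a (Uc (Φ x))
      rw [hUc x]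
      induction x using Finsupp.induction_linear with
      | zero => rw [map_zero, map_zero, E.lsmul_zero_right, map_zero, E'.lsmul_zero_right]
      | add f g hf hg =>
          rw [map_add, map_add, E.lsmul_add, map_add, hf, hg, E'.lsmul_add]
      | single p c =>
          obtain ⟨a', s, b⟩ := p
          rw [hsingleE, hsingleE']
          show Uc (E.lsmul a (c • E.rsmul (E.lsmul a' (ζ s)) b))
            = E'.lsmul a (c • E'.rsmul (E'.lsmul a' (ζ' s)) b)
          rw [E.lsmul_smul, map_smul, E'.lsmul_smul]
          congr 1
          rw [E.lsmul_rsmul, ← E.lsmul_lsmul, E'.lsmul_rsmul, ← E'.lsmul_lsmul]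
          have h := hUc (Finsupp.single (a * a', s, b) 1)
          rw [hsingleE, hsingleE', one_smul, one_smul] at h
          exact h
    exact fun ξ => congrFun (Continuous.ext_on hdense hcont1 hcont2 heq) ξ
  -- compatibility with the right action
  have hUrsmul : ∀ (ξ : E.carrier) (b : B), Uc (E.rsmul ξ b) = E'.rsmul (Uc ξ) b := by
    have key : ∀ (b : B) (ξ : E.carrier), Uc (E.rsmul ξ b) = E'.rsmul (Uc ξ) b := by
      intro b
      have hcont1 : Continuous fun ξ : E.carrier => Uc (E.rsmul ξ b) :=
        Uc.continuous.comp (E.rsmulL b).continuous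
      have hcont2 : Continuous fun ξ : E.carrier => E'.rsmul (Uc ξ) b :=
        (E'.rsmulL b).continuous.comp Uc.continuous
      have heq : Set.EqOn (fun ξ : E.carrier => Uc (E.rsmul ξ b))
          (fun ξ : E.carrier => E'.rsmul (Uc ξ) b) (D : Set E.carrier) := by
        intro ξ hξ
        obtain ⟨x, rfl⟩ := hξ
        show Uc (E.rsmul (Φ x) b) = E'.rsmul (Uc (Φ x)) b
        rw [hUc x]
        induction x using Finsupp.induction_linear with
        | zero => rw [map_zero, map_zero, E.rsmul_zero_left, map_zero, E'.rsmul_zero_left]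
        | add f g hf hg =>
            rw [map_add, map_add, E.rsmul_add_left, map_add, hf, hg, E'.rsmul_add_left]
        | single p c =>
            obtain ⟨a, s, b'⟩ := p
            rw [hsingleE, hsingleE']
            show Uc (E.rsmul (c • E.rsmul (E.lsmul a (ζ s)) b') b)
              = E'.rsmul (c • E'.rsmul (E'.lsmul a (ζ' s)) b') b
            rw [E.rsmul_smul_left, map_smul, E'.rsmul_smul_left]
            congr 1
            rw [E.rsmul_rsmul, E'.rsmul_rsmul]
            have h := hUc (Finsupp.single (a, s, b' * b) 1)
            rw [hsingleE, hsingleE', one_smul, one_smul] at h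
            exact h
      exact fun ξ => congrFun (Continuous.ext_on hdense hcont1 hcont2 heq) ξ
    exact fun ξ b => key b ξ
  -- inner products are preserved
  have hUip : ∀ ξ η : E.carrier, E'.ip (Uc ξ) (Uc η) = E.ip ξ η := by
    have hcont1 : Continuous fun p : E.carrier × E.carrier => E'.ip (Uc p.1) (Uc p.2) := by
      have h := E'.ip_continuous.comp
        (Continuous.prodMap Uc.continuous Uc.continuous)
      exact h
    have hcont2 := E.ip_continuous
    have hdd : Dense ((D : Set E.carrier) ×ˢ (D : Set E.carrier)) := hdense.prod hdense
    have heq : Set.EqOn (fun p : E.carrier × E.carrier => E'.ip (Uc p.1) (Uc p.2))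
        (fun p => E.ip p.1 p.2) ((D : Set E.carrier) ×ˢ (D : Set E.carrier)) := by
      rintro ⟨ξ, η⟩ ⟨hξ, hη⟩
      obtain ⟨x, rfl⟩ := hξ
      obtain ⟨y, rfl⟩ := hη
      show E'.ip (Uc (Φ x)) (Uc (Φ y)) = E.ip (Φ x) (Φ y)
      rw [hUc x, hUc y, gram]
    have h := Continuous.ext_on hdd hcont1 hcont2 heq
    exact fun ξ η => congrFun h (ξ, η)
  -- the distinguished vectors
  have hUz : ∀ s : S, Uc (ζ s) = ζ' s := by
    intro s
    have hmem : ζ s ∈ closure (D : Set E.carrier) := by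
      rw [hdense.closure_eq]; trivial
    rw [mem_closure_iff_seq_limit] at hmem
    obtain ⟨u, hu, hlim⟩ := hmem
    choose x hx using hu
    have h1 : Filter.Tendsto (fun n => Uc (u n)) Filter.atTop (nhds (Uc (ζ s))) :=
      (Uc.continuous.tendsto _).comp hlim
    have h2 : Filter.Tendsto (fun n => Uc (u n)) Filter.atTop (nhds (ζ' s)) := by
      have hform : (fun n => Uc (u n)) = fun n => Φ' (x n) := by
        funext n; rw [← hx n, hUc]
      rw [hform, tendsto_iff_dist_tendsto_zero]
      have hdist : (fun n => dist (Φ' (x n)) (ζ' s)) = fun n => dist (Φ (x n)) (ζ s) := by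
        funext n
        rw [dist_eq_norm, dist_eq_norm, normShift]
      rw [hdist]
      have hlim2 : Filter.Tendsto (fun n => Φ (x n)) Filter.atTop (nhds (ζ s)) := by
        have : (fun n => Φ (x n)) = u := funext hx
        rw [this]; exact hlim
      exact tendsto_iff_dist_tendsto_zero.mp hlim2
    exact tendsto_nhds_unique h1 h2
  -- conclusion
  refine ⟨⇑Uc, ⟨⟨hIso.injective, hsurj⟩, fun ξ η => map_add Uc ξ η,
    fun c ξ => map_smul Uc c ξ, hUlsmul, hUrsmul, hUip, hUz⟩, ?_⟩
  rintro V ⟨hVbij, hVadd, hVsmul, hVl, hVr, hVip, hVz⟩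
  have hVnorm : ∀ ξ, ‖V ξ‖ = ‖ξ‖ := by
    intro ξ
    have h1 : ‖V ξ‖ = Real.sqrt ‖E'.ip (V ξ) (V ξ)‖ := E'.norm_eq _
    have h2 : ‖ξ‖ = Real.sqrt ‖E.ip ξ ξ‖ := E.norm_eq _
    rw [h1, h2, hVip]
  have hVsub : ∀ ξ η, V (ξ - η) = V ξ - V η := by
    intro ξ η
    have h : ξ - η = ξ + (-1 : ℂ) • η := by rw [neg_one_smul, ← sub_eq_add_neg]
    rw [h, hVadd, hVsmul, neg_one_smul, ← sub_eq_add_neg]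
  have hVcont : Continuous V := by
    apply Isometry.continuous
    apply Isometry.of_dist_eq
    intro ξ η
    rw [dist_eq_norm, dist_eq_norm, ← hVsub, hVnorm]
  have hV0 : V 0 = 0 := by
    have h := hVadd 0 0
    rw [add_zero] at h
    exact left_eq_add.mp h
  have heqD : Set.EqOn V ⇑Uc (D : Set E.carrier) := by
    intro ξ hξ
    obtain ⟨x, rfl⟩ := hξ
    show V (Φ x) = Uc (Φ x)
    rw [hUc]
    induction x using Finsupp.induction_linear with
    | zero => rw [map_zero, map_zero]; exact hV0
    | add f g hf hg => rw [map_add, map_add, hVadd, hf, hg]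
    | single p c =>
        obtain ⟨a, s, b⟩ := p
        rw [hsingleE, hsingleE']
        show V (c • E.rsmul (E.lsmul a (ζ s)) b) = c • E'.rsmul (E'.lsmul a (ζ' s)) b
        rw [hVsmul]
        congr 1
        rw [hVr, hVl, hVz]
  exact Continuous.ext_on hdense hVcont Uc.continuous heqD

end Stmt4
end

section
/- Let X be a locally compact Hausdorff space and A a C*-algebra. Let C_b^str(X, M(A)) denote the set of bounded functions b : X → M(A) that are strictly continuous, i.e. for every a ∈ A the maps x ↦ b(x)·a and x ↦ a·b(x) are norm-continuous from X into A. Then C_b^str(X, M(A)) is a C*-algebra under pointwise operations and the supremum norm, and the map Θ that sends b ∈ C_b^str(X, M(A)) to the multiplier of C₀(X,A) acting by pointwise multiplication (so Θ(b)·f and f·Θ(b) are the functions x ↦ b(x)f(x) and x ↦ f(x)b(x), which lie in C₀(X,A) for every f ∈ C₀(X,A)) is an isometric *-isomorphism of C_b^str(X, M(A)) onto the multiplier algebra M(C₀(X,A)); moreover Θ is the unique *-homomorphism C_b^str(X, M(A)) → M(C₀(X,A)) whose restriction to C₀(X,A) (viewed inside C_b^str(X,M(A)) via the inclusion A ⊆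 M(A)) is the canonical embedding of C₀(X,A) into its multiplier algebra. (This is the constant-fibre case of the paper's Proposition identifying C_b(M(𝒜)) with M(C₀(𝒜)) for C*-bundles.) -/
/-!
STATEMENT 5: For a locally compact Hausdorff space `X` and a C*-algebra `A`, the
bounded strictly continuous functions `X → M(A)` form a C*-algebra under pointwise
operations and the supremum norm, and pointwise multiplication gives an isometric
*-isomorphism `Θ` of this algebra onto `M(C₀(X,A))`; `Θ` is the unique *-homomorphism
restricting to the canonical embedding on `C₀(X,A)`.

Multiplier algebras are realised as Mathlib's double centralizer algebras `𝓜(ℂ, ·)`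
(for `m : 𝓜(ℂ, A)` and `a : A`, `m·a = m.fst a`, `a·m = m.snd a`).  The C*-algebra
structure of the set of bounded strictly continuous functions is expressed by its
closure under the pointwise operations together with the isometric *-isomorphism `Θ`
onto the C*-algebra `𝓜(ℂ, C₀(X,A))`; since the subtype carries no a priori algebraic
structure, the homomorphism properties of maps defined on it are expressed via
pointwise identities.
-/

open scoped MultiplierAlgebra ZeroAtInfty

open Filter Topology Set

set_option linter.unusedSectionVars false

open scoped MultiplierAlgebra ZeroAtInfty
open Filter Topology Set

section generic
variable {B : Type*} [NonUnitalCStarAlgebra B]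

lemma eq_zero_of_forall_mul_left {d : B} (h : ∀ g : B, g * d = 0) : d = 0 := by
  have h1 := h (star d)
  have h2 : ‖d‖ * ‖d‖ = 0 := by rw [← CStarRing.norm_star_mul_self, h1, norm_zero]
  have : ‖d‖ = 0 := by nlinarith [norm_nonneg d]
  simpa using norm_eq_zero.mp this

lemma eq_zero_of_forall_mul_right {d : B} (h : ∀ g : B, d * g = 0) : d = 0 := by
  have h1 := h (star d)
  have h2 : ‖d‖ * ‖d‖ = 0 := by rw [← CStarRing.norm_self_mul_star, h1, norm_zero]
  have : ‖d‖ = 0 := by nlinarith [norm_nonneg d]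
  simpa using norm_eq_zero.mp this

lemma fst_mul_right (T : 𝓜(ℂ, B)) (f g : B) : T.fst (f * g) = T.fst f * g := by
  have key : ∀ h : B, h * (T.fst (f * g) - T.fst f * g) = 0 := by
    intro h
    have c1 := T.central h (f * g)
    have c2 := T.central h f
    rw [mul_sub, ← c1, ← mul_assoc, c2]
    simp [mul_assoc]
  exact sub_eq_zero.mp (eq_zero_of_forall_mul_left key)

lemma snd_mul_left (T : 𝓜(ℂ, B)) (f g : B) : T.snd (f * g) = f * T.snd g := by
  have key : ∀ h : B, (T.snd (f * g) - f * T.snd g) * h = 0 := by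
    intro h
    have c1 := T.central (f * g) h
    have c2 := T.central g h
    rw [sub_mul, c1, mul_assoc, ← c2]
    simp [mul_assoc]
  exact sub_eq_zero.mp (eq_zero_of_forall_mul_right key)

lemma mul_coe_eq (T : 𝓜(ℂ, B)) (a : B) : T * (a : 𝓜(ℂ, B)) = ((T.fst a : B) : 𝓜(ℂ, B)) := by
  ext : 1
  apply Prod.ext
  · ext c
    show T.fst ((a : 𝓜(ℂ, B)).fst c) = ((T.fst a : B) : 𝓜(ℂ, B)).fst c
    rw [DoubleCentralizer.coe_fst, DoubleCentralizer.coe_fst]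
    simp only [ContinuousLinearMap.mul_apply']
    exact (fst_mul_right T a c)
  · ext c
    show (a : 𝓜(ℂ, B)).snd (T.snd c) = ((T.fst a : B) : 𝓜(ℂ, B)).snd c
    rw [DoubleCentralizer.coe_snd, DoubleCentralizer.coe_snd]
    simp only [ContinuousLinearMap.flip_apply, ContinuousLinearMap.mul_apply']
    exact T.central c a

lemma coe_mul_eq (T : 𝓜(ℂ, B)) (a : B) : (a : 𝓜(ℂ, B)) * T = ((T.snd a : B) : 𝓜(ℂ, B)) := by
  ext : 1
  apply Prod.ext
  · ext c
    show (a : 𝓜(ℂ, B)).fst (T.fst c) = ((T.snd a : B) : 𝓜(ℂ, B)).fst c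
    rw [DoubleCentralizer.coe_fst, DoubleCentralizer.coe_fst]
    simp only [ContinuousLinearMap.mul_apply']
    exact (T.central a c).symm
  · ext c
    show T.snd ((a : 𝓜(ℂ, B)).snd c) = ((T.snd a : B) : 𝓜(ℂ, B)).snd c
    rw [DoubleCentralizer.coe_snd, DoubleCentralizer.coe_snd]
    simp only [ContinuousLinearMap.flip_apply, ContinuousLinearMap.mul_apply']
    exact snd_mul_left T c a

lemma norm_fst_apply_le (m : 𝓜(ℂ, B)) (a : B) : ‖m.fst a‖ ≤ ‖m‖ * ‖a‖ := by
  simpa [DoubleCentralizer.norm_fst] using m.fst.le_opNorm a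

lemma norm_snd_apply_le (m : 𝓜(ℂ, B)) (a : B) : ‖m.snd a‖ ≤ ‖m‖ * ‖a‖ := by
  simpa [DoubleCentralizer.norm_snd] using m.snd.le_opNorm a

end generic

section C0helpers
variable {X : Type*} [TopologicalSpace X] [LocallyCompactSpace X] [T2Space X]
variable {A : Type*} [NonUnitalCStarAlgebra A]
open Filter Topology Set
set_option linter.unusedSectionVars false

variable {X : Type*} [TopologicalSpace X] [LocallyCompactSpace X] [T2Space X]
variable {A : Type*} [NonUnitalCStarAlgebra A]

lemma C0_norm_apply_le (f : C₀(X, A)) (x : X) : ‖f x‖ ≤ ‖f‖ := by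
  rw [← ZeroAtInftyContinuousMap.norm_toBCF_eq_norm]
  exact f.toBCF.norm_coe_le_norm x

lemma C0_norm_le {f : C₀(X, A)} {M : ℝ} (hM : 0 ≤ M) (h : ∀ x, ‖f x‖ ≤ M) : ‖f‖ ≤ M := by
  rw [← ZeroAtInftyContinuousMap.norm_toBCF_eq_norm]
  exact (BoundedContinuousFunction.norm_le hM).mpr h

/-- bump equal to 1 on a neighbourhood of `x`. -/
lemma exists_bump_nhds (x : X) :
    ∃ φ : C(X, ℝ), HasCompactSupport φ ∧ (∀ y, φ y ∈ Icc (0:ℝ) 1) ∧ ∀ᶠ y in 𝓝 x, φ y = 1 := by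
  obtain ⟨K, hK, hKx⟩ := exists_compact_mem_nhds x
  obtain ⟨φ, h1, _, hcs, hIcc⟩ :=
    exists_continuous_one_zero_of_isCompact hK isClosed_empty (disjoint_empty K)
  exact ⟨φ, hcs, hIcc, eventually_of_mem hKx fun y hy => h1 hy⟩

/-- bump supported inside a given open set. -/
lemma exists_bump_subset {x : X} {U : Set X} (hU : IsOpen U) (hxU : x ∈ U) :
    ∃ φ : C(X, ℝ), HasCompactSupport φ ∧ (∀ y, φ y ∈ Icc (0:ℝ) 1) ∧ φ x = 1 ∧
      ∀ y, y ∉ U → φ y = 0 := by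
  obtain ⟨φ, h1, h0, hcs, hIcc⟩ := exists_continuous_one_zero_of_isCompact
    (isCompact_singleton (x := x)) hU.isClosed_compl (by simpa using hxU)
  exact ⟨φ, hcs, hIcc, h1 rfl, fun y hy => h0 hy⟩

/-- The function `y ↦ φ y • a` as an element of `C₀(X, A)`. -/
noncomputable def deltaF (φ : C(X, ℝ)) (hφ : HasCompactSupport φ) (a : A) : C₀(X, A) where
  toFun := fun y => φ y • a
  continuous_toFun := (map_continuous φ).smul continuous_const
  zero_at_infty' := by
    have h : HasCompactSupport (⇑φ • (fun _ : X => a)) := hφ.smul_right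
    have := h.is_zero_at_infty
    exact this

@[simp] lemma deltaF_apply (φ : C(X, ℝ)) (hφ : HasCompactSupport φ) (a : A) (y : X) :
    deltaF φ hφ a y = φ y • a := rfl

lemma deltaF_norm_le (φ : C(X, ℝ)) (hφ : HasCompactSupport φ) (hIcc : ∀ y, φ y ∈ Icc (0:ℝ) 1)
    (a : A) : ‖deltaF φ hφ a‖ ≤ ‖a‖ := by
  refine C0_norm_le (norm_nonneg a) fun y => ?_
  rw [deltaF_apply, norm_smul, Real.norm_eq_abs, abs_of_nonneg (hIcc y).1]
  exact mul_le_of_le_one_left (norm_nonneg a) (hIcc y).2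

lemma deltaF_add (φ : C(X, ℝ)) (hφ : HasCompactSupport φ) (a b : A) :
    deltaF φ hφ (a + b) = deltaF φ hφ a + deltaF φ hφ b := by
  ext y; simp [smul_add]

lemma deltaF_smul (φ : C(X, ℝ)) (hφ : HasCompactSupport φ) (z : ℂ) (a : A) :
    deltaF φ hφ (z • a) = z • deltaF φ hφ a := by
  ext y; simp [smul_comm (φ y) z a]
end C0helpers

namespace Stmt5

variable (X : Type*) [TopologicalSpace X] [LocallyCompactSpace X] [T2Space X]
variable (A : Type*) [NonUnitalCStarAlgebra A]

/-- The set of bounded, strictly continuous functions `X → M(A)`. -/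
def Sstr : Set (X → 𝓜(ℂ, A)) :=
  {b | (∃ C : ℝ, ∀ x, ‖b x‖ ≤ C) ∧ (∀ a : A, Continuous fun x => (b x).fst a) ∧
    ∀ a : A, Continuous fun x => (b x).snd a}

/-- `Θ : C_b^str(X, M(A)) → M(C₀(X,A))` is a *-homomorphism (with respect to the
pointwise operations on the domain). -/
def IsStarHom (Θ : ↥(Sstr X A) → 𝓜(ℂ, C₀(X, A))) : Prop :=
  (∀ b b' c : ↥(Sstr X A), (∀ x, c.val x = b.val x + b'.val x) → Θ c = Θ b + Θ b') ∧
    (∀ (z : ℂ) (b c : ↥(Sstr X A)), (∀ x, c.val x = z • b.val x) → Θ c = z • Θ b) ∧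
    (∀ b b' c : ↥(Sstr X A), (∀ x, c.val x = b.val x * b'.val x) → Θ c = Θ b * Θ b') ∧
    ∀ b c : ↥(Sstr X A), (∀ x, c.val x = star (b.val x)) → Θ c = star (Θ b)

/-- The restriction of `Θ` to `C₀(X,A)` (included in `C_b^str(X, M(A))` via `A ⊆ M(A)`)
is the canonical embedding `C₀(X,A) → M(C₀(X,A))`. -/
def ExtendsCanonicalEmbedding (Θ : ↥(Sstr X A) → 𝓜(ℂ, C₀(X, A))) : Prop :=
  ∀ (f : C₀(X, A)) (b : ↥(Sstr X A)),
    (∀ x, b.val x = ((f x : A) : 𝓜(ℂ, A))) → Θ b = ((f : 𝓜(ℂ, C₀(X, A))))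

section helpers
variable {X : Type*} [TopologicalSpace X] [LocallyCompactSpace X] [T2Space X]
variable {A : Type*} [NonUnitalCStarAlgebra A]


lemma Sstr.bound {b : X → 𝓜(ℂ, A)} (hb : b ∈ Sstr X A) :
    ∃ C : ℝ, 0 ≤ C ∧ ∀ x, ‖b x‖ ≤ C := by
  obtain ⟨C, hC⟩ := hb.1
  exact ⟨max C 0, le_max_right _ _, fun x => (hC x).trans (le_max_left _ _)⟩

/-- strict continuity upgrades to continuity against varying vectors -/
lemma cont_fst_apply {b : X → 𝓜(ℂ, A)} (hb : b ∈ Sstr X A) {g : X → A} (hg : Continuous g) :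
    Continuous fun x => (b x).fst (g x) := by
  obtain ⟨C, hC0, hC⟩ := Sstr.bound hb
  rw [continuous_iff_continuousAt]
  intro x₀
  have hrw : (fun x => (b x).fst (g x)) =
      fun x => (b x).fst (g x - g x₀) + (b x).fst (g x₀) := by
    funext x; rw [← map_add, sub_add_cancel]
  rw [hrw]
  have h2 : ContinuousAt (fun x => (b x).fst (g x₀)) x₀ := (hb.2.1 (g x₀)).continuousAt
  have h1 : Tendsto (fun x => (b x).fst (g x - g x₀)) (𝓝 x₀) (𝓝 0) := by
    apply squeeze_zero_norm (a := fun x => C * ‖g x - g x₀‖)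
    · intro x
      calc ‖(b x).fst (g x - g x₀)‖ ≤ ‖b x‖ * ‖g x - g x₀‖ := norm_fst_apply_le _ _
        _ ≤ C * ‖g x - g x₀‖ := by
          exact mul_le_mul_of_nonneg_right (hC x) (norm_nonneg _)
    · have : Tendsto (fun x => ‖g x - g x₀‖) (𝓝 x₀) (𝓝 ‖g x₀ - g x₀‖) :=
        ((hg.sub continuous_const).norm).continuousAt
      simpa using this.const_mul C
  have := h1.add h2
  simpa [ContinuousAt] using this

lemma cont_snd_apply {b : X → 𝓜(ℂ, A)} (hb : b ∈ Sstr X A) {g : X → A} (hg : Continuous g) :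
    Continuous fun x => (b x).snd (g x) := by
  obtain ⟨C, hC0, hC⟩ := Sstr.bound hb
  rw [continuous_iff_continuousAt]
  intro x₀
  have hrw : (fun x => (b x).snd (g x)) =
      fun x => (b x).snd (g x - g x₀) + (b x).snd (g x₀) := by
    funext x; rw [← map_add, sub_add_cancel]
  rw [hrw]
  have h2 : ContinuousAt (fun x => (b x).snd (g x₀)) x₀ := (hb.2.2 (g x₀)).continuousAt
  have h1 : Tendsto (fun x => (b x).snd (g x - g x₀)) (𝓝 x₀) (𝓝 0) := by
    apply squeeze_zero_norm (a := fun x => C * ‖g x - g x₀‖)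
    · intro x
      calc ‖(b x).snd (g x - g x₀)‖ ≤ ‖b x‖ * ‖g x - g x₀‖ := norm_snd_apply_le _ _
        _ ≤ C * ‖g x - g x₀‖ := by
          exact mul_le_mul_of_nonneg_right (hC x) (norm_nonneg _)
    · have : Tendsto (fun x => ‖g x - g x₀‖) (𝓝 x₀) (𝓝 ‖g x₀ - g x₀‖) :=
        ((hg.sub continuous_const).norm).continuousAt
      simpa using this.const_mul C
  have := h1.add h2
  simpa [ContinuousAt] using this

/-- left action of a strictly continuous bounded function on `C₀(X, A)` -/
noncomputable def lact (b : ↥(Sstr X A)) (f : C₀(X, A)) : C₀(X, A) where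
  toFun := fun x => (b.val x).fst (f x)
  continuous_toFun := cont_fst_apply b.2 (map_continuous f)
  zero_at_infty' := by
    obtain ⟨C, hC0, hC⟩ := Sstr.bound b.2
    apply squeeze_zero_norm (a := fun x => C * ‖f x‖)
    · intro x
      exact (norm_fst_apply_le _ _).trans (mul_le_mul_of_nonneg_right (hC x) (norm_nonneg _))
    · simpa using (zero_at_infty f).norm.const_mul C

noncomputable def ract (b : ↥(Sstr X A)) (f : C₀(X, A)) : C₀(X, A) where
  toFun := fun x => (b.val x).snd (f x)
  continuous_toFun := cont_snd_apply b.2 (map_continuous f)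
  zero_at_infty' := by
    obtain ⟨C, hC0, hC⟩ := Sstr.bound b.2
    apply squeeze_zero_norm (a := fun x => C * ‖f x‖)
    · intro x
      exact (norm_snd_apply_le _ _).trans (mul_le_mul_of_nonneg_right (hC x) (norm_nonneg _))
    · simpa using (zero_at_infty f).norm.const_mul C

@[simp] lemma lact_apply (b : ↥(Sstr X A)) (f : C₀(X, A)) (x : X) :
    lact b f x = (b.val x).fst (f x) := rfl

@[simp] lemma ract_apply (b : ↥(Sstr X A)) (f : C₀(X, A)) (x : X) :
    ract b f x = (b.val x).snd (f x) := rfl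



/-- The map `Θ`. -/
noncomputable def theta (b : ↥(Sstr X A)) : 𝓜(ℂ, C₀(X, A)) where
  toProd :=
    (LinearMap.mkContinuousOfExistsBound
      { toFun := lact b
        map_add' := fun f g => by
          ext x
          simp [ZeroAtInftyContinuousMap.add_apply, map_add]
        map_smul' := fun z f => by
          ext x
          simp [ZeroAtInftyContinuousMap.smul_apply, map_smul] }
      (by
        obtain ⟨C, hC0, hC⟩ := Sstr.bound b.2
        refine ⟨C, fun f => C0_norm_le (mul_nonneg hC0 (norm_nonneg f)) fun x => ?_⟩
        calc ‖(b.val x).fst (f x)‖ ≤ ‖b.val x‖ * ‖f x‖ := norm_fst_apply_le _ _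
          _ ≤ C * ‖f‖ := mul_le_mul (hC x) (C0_norm_apply_le f x) (norm_nonneg _) hC0),
    LinearMap.mkContinuousOfExistsBound
      { toFun := ract b
        map_add' := fun f g => by
          ext x
          simp [ZeroAtInftyContinuousMap.add_apply, map_add]
        map_smul' := fun z f => by
          ext x
          simp [ZeroAtInftyContinuousMap.smul_apply, map_smul] }
      (by
        obtain ⟨C, hC0, hC⟩ := Sstr.bound b.2
        refine ⟨C, fun f => C0_norm_le (mul_nonneg hC0 (norm_nonneg f)) fun x => ?_⟩
        calc ‖(b.val x).snd (f x)‖ ≤ ‖b.val x‖ * ‖f x‖ := norm_snd_apply_le _ _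
          _ ≤ C * ‖f‖ := mul_le_mul (hC x) (C0_norm_apply_le f x) (norm_nonneg _) hC0))
  central := fun f g => by
    ext x
    simp only [ZeroAtInftyContinuousMap.mul_apply, LinearMap.mkContinuousOfExistsBound_apply,
      LinearMap.coe_mk, AddHom.coe_mk, lact_apply, ract_apply]
    exact (b.val x).central (f x) (g x)

@[simp] lemma theta_fst_apply (b : ↥(Sstr X A)) (f : C₀(X, A)) (x : X) :
    (theta b).fst f x = (b.val x).fst (f x) := rfl

@[simp] lemma theta_snd_apply (b : ↥(Sstr X A)) (f : C₀(X, A)) (x : X) :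
    (theta b).snd f x = (b.val x).snd (f x) := rfl

/-- If `f` vanishes at `x`, so does `T.fst f`. -/
lemma fst_apply_eq_zero (T : 𝓜(ℂ, C₀(X, A))) (f : C₀(X, A)) (x : X) (hfx : f x = 0) :
    T.fst f x = 0 := by
  by_contra hc
  set c := T.fst f x with hcdef
  have hcn : 0 < ‖c‖ := norm_pos_iff.mpr hc
  set N := ‖T.fst‖ + 1 with hNdef
  have hN : 0 < N := by positivity
  set ε := ‖c‖ / (2 * N) with hεdef
  have hε : 0 < ε := by positivity
  have hU : IsOpen {y : X | ‖f y‖ < ε} :=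
    isOpen_lt (continuous_norm.comp (map_continuous f)) continuous_const
  have hxU : x ∈ {y : X | ‖f y‖ < ε} := by simp [hfx, hε]
  obtain ⟨φ, hcs, hIcc, hφx, hφ0⟩ := exists_bump_subset hU hxU
  set u := ‖c‖⁻¹ • star c with hudef
  have hu : ‖u‖ = 1 := by
    rw [hudef, norm_smul, norm_inv, norm_norm, norm_star]
    field_simp
  set e := deltaF φ hcs u with hedef
  have hfe : ‖f * e‖ ≤ ε := by
    refine C0_norm_le hε.le fun y => ?_
    by_cases hy : ‖f y‖ < ε
    · calc ‖(f * e) y‖ = ‖f y * (φ y • u)‖ := rfl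
        _ ≤ ‖f y‖ * ‖φ y • u‖ := norm_mul_le _ _
        _ ≤ ε * 1 := by
            refine mul_le_mul hy.le ?_ (norm_nonneg _) hε.le
            rw [norm_smul, Real.norm_eq_abs, abs_of_nonneg (hIcc y).1, hu, mul_one]
            exact (hIcc y).2
        _ = ε := mul_one ε
    · have h0 : φ y = 0 := hφ0 y (by simpa using hy)
      have : (f * e) y = f y * (φ y • u) := rfl
      rw [this, h0]
      simp [hε.le]
  have key : T.fst (f * e) = T.fst f * e := fst_mul_right T f e
  have h1 : ‖(T.fst f * e) x‖ ≤ ‖T.fst‖ * ε := by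
    rw [← key]
    calc ‖T.fst (f * e) x‖ ≤ ‖T.fst (f * e)‖ := C0_norm_apply_le _ _
      _ ≤ ‖T.fst‖ * ‖f * e‖ := (T.fst).le_opNorm _
      _ ≤ ‖T.fst‖ * ε := mul_le_mul_of_nonneg_left hfe (norm_nonneg _)
  have h2 : (T.fst f * e) x = c * u := by
    have : (T.fst f * e) x = (T.fst f x) * (φ x • u) := rfl
    rw [this, hφx, one_smul]
  have h3 : ‖c * u‖ = ‖c‖ := by
    rw [hudef, mul_smul_comm, norm_smul, norm_inv, norm_norm,
      CStarRing.norm_self_mul_star]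
    field_simp
  have hle : ‖c‖ ≤ ‖T.fst‖ * ε := by rw [← h3, ← h2]; exact h1
  have h4 : ‖T.fst‖ * ε = ‖T.fst‖ * ‖c‖ / (2 * N) := by rw [hεdef, mul_div_assoc]
  rw [h4, le_div_iff₀ (by positivity)] at hle
  rw [hNdef] at hle
  nlinarith [norm_nonneg (T.fst)]

lemma snd_apply_eq_zero (T : 𝓜(ℂ, C₀(X, A))) (f : C₀(X, A)) (x : X) (hfx : f x = 0) :
    T.snd f x = 0 := by
  by_contra hc
  set c := T.snd f x with hcdef
  have hcn : 0 < ‖c‖ := norm_pos_iff.mpr hc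
  set N := ‖T.snd‖ + 1 with hNdef
  have hN : 0 < N := by positivity
  set ε := ‖c‖ / (2 * N) with hεdef
  have hε : 0 < ε := by positivity
  have hU : IsOpen {y : X | ‖f y‖ < ε} :=
    isOpen_lt (continuous_norm.comp (map_continuous f)) continuous_const
  have hxU : x ∈ {y : X | ‖f y‖ < ε} := by simp [hfx, hε]
  obtain ⟨φ, hcs, hIcc, hφx, hφ0⟩ := exists_bump_subset hU hxU
  set u := ‖c‖⁻¹ • star c with hudef
  have hu : ‖u‖ = 1 := by
    rw [hudef, norm_smul, norm_inv, norm_norm, norm_star]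
    field_simp
  set e := deltaF φ hcs u with hedef
  have hfe : ‖e * f‖ ≤ ε := by
    refine C0_norm_le hε.le fun y => ?_
    by_cases hy : ‖f y‖ < ε
    · calc ‖(e * f) y‖ = ‖(φ y • u) * f y‖ := rfl
        _ ≤ ‖φ y • u‖ * ‖f y‖ := norm_mul_le _ _
        _ ≤ 1 * ε := by
            refine mul_le_mul ?_ hy.le (norm_nonneg _) zero_le_one
            rw [norm_smul, Real.norm_eq_abs, abs_of_nonneg (hIcc y).1, hu, mul_one]
            exact (hIcc y).2
        _ = ε := one_mul ε
    · have h0 : φ y = 0 := hφ0 y (by simpa using hy)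
      have : (e * f) y = (φ y • u) * f y := rfl
      rw [this, h0]
      simp [hε.le]
  have key : T.snd (e * f) = e * T.snd f := snd_mul_left T e f
  have h1 : ‖(e * T.snd f) x‖ ≤ ‖T.snd‖ * ε := by
    rw [← key]
    calc ‖T.snd (e * f) x‖ ≤ ‖T.snd (e * f)‖ := C0_norm_apply_le _ _
      _ ≤ ‖T.snd‖ * ‖e * f‖ := (T.snd).le_opNorm _
      _ ≤ ‖T.snd‖ * ε := mul_le_mul_of_nonneg_left hfe (norm_nonneg _)
  have h2 : (e * T.snd f) x = u * c := by
    have : (e * T.snd f) x = (φ x • u) * (T.snd f x) := rfl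
    rw [this, hφx, one_smul]
  have h3 : ‖u * c‖ = ‖c‖ := by
    rw [hudef, smul_mul_assoc, norm_smul, norm_inv, norm_norm,
      CStarRing.norm_star_mul_self]
    field_simp
  have hle : ‖c‖ ≤ ‖T.snd‖ * ε := by rw [← h3, ← h2]; exact h1
  have h4 : ‖T.snd‖ * ε = ‖T.snd‖ * ‖c‖ / (2 * N) := by rw [hεdef, mul_div_assoc]
  rw [h4, le_div_iff₀ (by positivity)] at hle
  rw [hNdef] at hle
  nlinarith [norm_nonneg (T.snd)]

lemma fst_congr (T : 𝓜(ℂ, C₀(X, A))) {f g : C₀(X, A)} (x : X) (h : f x = g x) :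
    T.fst f x = T.fst g x := by
  have h0 := fst_apply_eq_zero T (f - g) x (by simp [ZeroAtInftyContinuousMap.sub_apply, h])
  rw [map_sub] at h0
  have : T.fst f x - T.fst g x = 0 := by
    rw [← ZeroAtInftyContinuousMap.sub_apply]; exact h0
  exact sub_eq_zero.mp this

lemma snd_congr (T : 𝓜(ℂ, C₀(X, A))) {f g : C₀(X, A)} (x : X) (h : f x = g x) :
    T.snd f x = T.snd g x := by
  have h0 := snd_apply_eq_zero T (f - g) x (by simp [ZeroAtInftyContinuousMap.sub_apply, h])
  rw [map_sub] at h0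
  have : T.snd f x - T.snd g x = 0 := by
    rw [← ZeroAtInftyContinuousMap.sub_apply]; exact h0
  exact sub_eq_zero.mp this



noncomputable def bump (x : X) : C(X, ℝ) := (exists_bump_nhds x).choose
lemma bump_compactSupport (x : X) : HasCompactSupport (bump x) :=
  (exists_bump_nhds x).choose_spec.1
lemma bump_Icc (x : X) : ∀ y, bump x y ∈ Icc (0:ℝ) 1 := (exists_bump_nhds x).choose_spec.2.1
lemma bump_eventually (x : X) : ∀ᶠ y in 𝓝 x, bump x y = 1 :=
  (exists_bump_nhds x).choose_spec.2.2
@[simp] lemma bump_self (x : X) : bump x x = 1 := (bump_eventually x).self_of_nhds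

noncomputable def deltaA (x : X) (a : A) : C₀(X, A) :=
  deltaF (bump x) (bump_compactSupport x) a

@[simp] lemma deltaA_apply (x : X) (a : A) (y : X) : deltaA x a y = bump x y • a := rfl
@[simp] lemma deltaA_self (x : X) (a : A) : deltaA x a x = a := by simp
lemma deltaA_add (x : X) (a b : A) : deltaA x (a + b) = deltaA x a + deltaA x b :=
  deltaF_add _ _ _ _
lemma deltaA_smul (x : X) (z : ℂ) (a : A) : deltaA x (z • a) = z • deltaA x a :=
  deltaF_smul _ _ _ _
lemma deltaA_norm_le (x : X) (a : A) : ‖deltaA x a‖ ≤ ‖a‖ :=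
  deltaF_norm_le _ _ (bump_Icc x) a

/-- The inverse construction: from a multiplier of `C₀(X, A)` to a function `X → 𝓜(ℂ, A)`. -/
noncomputable def bOf (T : 𝓜(ℂ, C₀(X, A))) (x : X) : 𝓜(ℂ, A) where
  toProd :=
    (LinearMap.mkContinuousOfExistsBound
      { toFun := fun a => T.fst (deltaA x a) x
        map_add' := fun a a' => by
          simp only [deltaA_add, map_add, ZeroAtInftyContinuousMap.add_apply]
        map_smul' := fun z a => by
          simp only [deltaA_smul, map_smul, ZeroAtInftyContinuousMap.smul_apply,
            RingHom.id_apply] }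
      ⟨‖T.fst‖, fun a => by
        calc ‖T.fst (deltaA x a) x‖ ≤ ‖T.fst (deltaA x a)‖ := C0_norm_apply_le _ _
          _ ≤ ‖T.fst‖ * ‖deltaA x a‖ := (T.fst).le_opNorm _
          _ ≤ ‖T.fst‖ * ‖a‖ :=
            mul_le_mul_of_nonneg_left (deltaA_norm_le x a) (norm_nonneg _)⟩,
    LinearMap.mkContinuousOfExistsBound
      { toFun := fun a => T.snd (deltaA x a) x
        map_add' := fun a a' => by
          simp only [deltaA_add, map_add, ZeroAtInftyContinuousMap.add_apply]
        map_smul' := fun z a => by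
          simp only [deltaA_smul, map_smul, ZeroAtInftyContinuousMap.smul_apply,
            RingHom.id_apply] }
      ⟨‖T.snd‖, fun a => by
        calc ‖T.snd (deltaA x a) x‖ ≤ ‖T.snd (deltaA x a)‖ := C0_norm_apply_le _ _
          _ ≤ ‖T.snd‖ * ‖deltaA x a‖ := (T.snd).le_opNorm _
          _ ≤ ‖T.snd‖ * ‖a‖ :=
            mul_le_mul_of_nonneg_left (deltaA_norm_le x a) (norm_nonneg _)⟩)
  central := fun a a' => by
    show T.snd (deltaA x a) x * a' = a * T.fst (deltaA x a') x
    have h : (T.snd (deltaA x a) * deltaA x a') x = (deltaA x a * T.fst (deltaA x a')) x := by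
      rw [T.central]
    rw [ZeroAtInftyContinuousMap.mul_apply, ZeroAtInftyContinuousMap.mul_apply,
      deltaA_self, deltaA_self] at h
    exact h

@[simp] lemma bOf_fst (T : 𝓜(ℂ, C₀(X, A))) (x : X) (a : A) :
    (bOf T x).fst a = T.fst (deltaA x a) x := rfl
@[simp] lemma bOf_snd (T : 𝓜(ℂ, C₀(X, A))) (x : X) (a : A) :
    (bOf T x).snd a = T.snd (deltaA x a) x := rfl

lemma bOf_mem (T : 𝓜(ℂ, C₀(X, A))) : bOf T ∈ Sstr X A := by
  refine ⟨⟨max ‖T.fst‖ ‖T.snd‖, fun x => ?_⟩, fun a => ?_, fun a => ?_⟩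
  · rw [← DoubleCentralizer.norm_fst]
    apply ContinuousLinearMap.opNorm_le_bound _ (le_max_iff.mpr (Or.inl (norm_nonneg _)))
    intro a
    calc ‖(bOf T x).fst a‖ = ‖T.fst (deltaA x a) x‖ := rfl
      _ ≤ ‖T.fst (deltaA x a)‖ := C0_norm_apply_le _ _
      _ ≤ ‖T.fst‖ * ‖deltaA x a‖ := (T.fst).le_opNorm _
      _ ≤ ‖T.fst‖ * ‖a‖ := mul_le_mul_of_nonneg_left (deltaA_norm_le x a) (norm_nonneg _)
      _ ≤ max ‖T.fst‖ ‖T.snd‖ * ‖a‖ :=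
        mul_le_mul_of_nonneg_right (le_max_left _ _) (norm_nonneg _)
  · rw [continuous_iff_continuousAt]
    intro x₀
    have hev : (fun x => T.fst (deltaA x₀ a) x) =ᶠ[𝓝 x₀] fun x => (bOf T x).fst a := by
      filter_upwards [bump_eventually x₀] with y hy
      exact (fst_congr T y (by simp [hy])).symm
    exact ContinuousAt.congr (map_continuous (T.fst (deltaA x₀ a))).continuousAt hev
  · rw [continuous_iff_continuousAt]
    intro x₀
    have hev : (fun x => T.snd (deltaA x₀ a) x) =ᶠ[𝓝 x₀] fun x => (bOf T x).snd a := by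
      filter_upwards [bump_eventually x₀] with y hy
      exact (snd_congr T y (by simp [hy])).symm
    exact ContinuousAt.congr (map_continuous (T.snd (deltaA x₀ a))).continuousAt hev

lemma theta_bOf (T : 𝓜(ℂ, C₀(X, A))) : theta ⟨bOf T, bOf_mem T⟩ = T := by
  ext : 1
  apply Prod.ext
  · apply ContinuousLinearMap.ext; intro f
    apply ZeroAtInftyContinuousMap.ext; intro x
    show T.fst (deltaA x (f x)) x = T.fst f x
    exact fst_congr T x (deltaA_self x (f x))
  · apply ContinuousLinearMap.ext; intro f
    apply ZeroAtInftyContinuousMap.ext; intro x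
    show T.snd (deltaA x (f x)) x = T.snd f x
    exact snd_congr T x (deltaA_self x (f x))

lemma theta_injective : Function.Injective (theta (X := X) (A := A)) := by
  intro b b' h
  apply Subtype.ext; funext x
  ext : 1
  apply Prod.ext
  · apply ContinuousLinearMap.ext; intro a
    have h1 : (theta b).fst (deltaA x a) x = (theta b').fst (deltaA x a) x := by rw [h]
    simpa using h1
  · apply ContinuousLinearMap.ext; intro a
    have h1 : (theta b).snd (deltaA x a) x = (theta b').snd (deltaA x a) x := by rw [h]
    simpa using h1

lemma theta_norm (b : ↥(Sstr X A)) : ‖theta b‖ = ⨆ x, ‖b.val x‖ := by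
  obtain ⟨C, hC0, hC⟩ := Sstr.bound b.2
  have hbdd : BddAbove (range fun x => ‖b.val x‖) := ⟨C, by rintro - ⟨x, rfl⟩; exact hC x⟩
  have hnn : (0:ℝ) ≤ ⨆ x, ‖b.val x‖ := Real.iSup_nonneg fun x => norm_nonneg _
  apply le_antisymm
  · rw [← DoubleCentralizer.norm_fst]
    apply ContinuousLinearMap.opNorm_le_bound _ hnn
    intro f
    refine C0_norm_le (mul_nonneg hnn (norm_nonneg f)) fun x => ?_
    calc ‖(theta b).fst f x‖ = ‖(b.val x).fst (f x)‖ := rfl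
      _ ≤ ‖b.val x‖ * ‖f x‖ := norm_fst_apply_le _ _
      _ ≤ (⨆ x, ‖b.val x‖) * ‖f‖ :=
        mul_le_mul (le_ciSup hbdd x) (C0_norm_apply_le f x) (norm_nonneg _) hnn
  · refine Real.iSup_le (fun x => ?_) (norm_nonneg _)
    rw [← DoubleCentralizer.norm_fst]
    apply ContinuousLinearMap.opNorm_le_bound _ (norm_nonneg _)
    intro a
    calc ‖(b.val x).fst a‖ = ‖(theta b).fst (deltaA x a) x‖ := by simp
      _ ≤ ‖(theta b).fst (deltaA x a)‖ := C0_norm_apply_le _ _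
      _ ≤ ‖(theta b).fst‖ * ‖deltaA x a‖ := ((theta b).fst).le_opNorm _
      _ ≤ ‖theta b‖ * ‖a‖ := by
          rw [DoubleCentralizer.norm_fst]
          exact mul_le_mul_of_nonneg_left (deltaA_norm_le x a) (norm_nonneg _)



lemma Sstr.add_mem {b b' : X → 𝓜(ℂ, A)} (hb : b ∈ Sstr X A) (hb' : b' ∈ Sstr X A) :
    b + b' ∈ Sstr X A := by
  obtain ⟨⟨C, hC⟩, h1, h2⟩ := hb
  obtain ⟨⟨C', hC'⟩, h1', h2'⟩ := hb'
  refine ⟨⟨C + C', fun x => ?_⟩, fun a => ?_, fun a => ?_⟩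
  · exact (norm_add_le _ _).trans (add_le_add (hC x) (hC' x))
  · have : (fun x => ((b + b') x).fst a) = fun x => (b x).fst a + (b' x).fst a := by
      funext x
      simp [Pi.add_apply, DoubleCentralizer.add_fst, ContinuousLinearMap.add_apply]
    rw [this]; exact (h1 a).add (h1' a)
  · have : (fun x => ((b + b') x).snd a) = fun x => (b x).snd a + (b' x).snd a := by
      funext x
      simp [Pi.add_apply, DoubleCentralizer.add_snd, ContinuousLinearMap.add_apply]
    rw [this]; exact (h2 a).add (h2' a)

lemma Sstr.smul_mem (z : ℂ) {b : X → 𝓜(ℂ, A)} (hb : b ∈ Sstr X A) :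
    z • b ∈ Sstr X A := by
  obtain ⟨⟨C, hC⟩, h1, h2⟩ := hb
  refine ⟨⟨‖z‖ * C, fun x => ?_⟩, fun a => ?_, fun a => ?_⟩
  · rw [Pi.smul_apply, norm_smul]
    exact mul_le_mul_of_nonneg_left (hC x) (norm_nonneg z)
  · have : (fun x => ((z • b) x).fst a) = fun x => z • ((b x).fst a) := by
      funext x
      simp [Pi.smul_apply, DoubleCentralizer.smul_fst, ContinuousLinearMap.smul_apply]
    rw [this]; exact (h1 a).const_smul z
  · have : (fun x => ((z • b) x).snd a) = fun x => z • ((b x).snd a) := by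
      funext x
      simp [Pi.smul_apply, DoubleCentralizer.smul_snd, ContinuousLinearMap.smul_apply]
    rw [this]; exact (h2 a).const_smul z

lemma Sstr.mul_mem {b b' : X → 𝓜(ℂ, A)} (hb : b ∈ Sstr X A) (hb' : b' ∈ Sstr X A) :
    b * b' ∈ Sstr X A := by
  obtain ⟨C, hC0, hC⟩ := Sstr.bound hb
  obtain ⟨C', hC0', hC'⟩ := Sstr.bound hb'
  refine ⟨⟨C * C', fun x => ?_⟩, fun a => ?_, fun a => ?_⟩
  · exact (norm_mul_le _ _).trans (mul_le_mul (hC x) (hC' x) (norm_nonneg _) hC0)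
  · have : (fun x => ((b * b') x).fst a) = fun x => (b x).fst ((b' x).fst a) := by
      funext x
      simp [Pi.mul_apply, DoubleCentralizer.mul_fst, ContinuousLinearMap.mul_apply]
    rw [this]; exact cont_fst_apply hb (hb'.2.1 a)
  · have : (fun x => ((b * b') x).snd a) = fun x => (b' x).snd ((b x).snd a) := by
      funext x
      simp [Pi.mul_apply, DoubleCentralizer.mul_snd, ContinuousLinearMap.mul_apply]
    rw [this]; exact cont_snd_apply hb' (hb.2.2 a)

lemma Sstr.star_mem {b : X → 𝓜(ℂ, A)} (hb : b ∈ Sstr X A) :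
    star b ∈ Sstr X A := by
  obtain ⟨⟨C, hC⟩, h1, h2⟩ := hb
  refine ⟨⟨C, fun x => ?_⟩, fun a => ?_, fun a => ?_⟩
  · rw [Pi.star_apply, norm_star]; exact hC x
  · have : (fun x => ((star b) x).fst a) = fun x => star ((b x).snd (star a)) := by
      funext x
      simp [Pi.star_apply]
    rw [this]; exact (h2 (star a)).star
  · have : (fun x => ((star b) x).snd a) = fun x => star ((b x).fst (star a)) := by
      funext x
      simp [Pi.star_apply]
    rw [this]; exact (h1 (star a)).star

lemma Sstr.one_mem : (1 : X → 𝓜(ℂ, A)) ∈ Sstr X A := by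
  refine ⟨⟨‖(1 : 𝓜(ℂ, A))‖, fun x => le_refl _⟩, fun a => ?_, fun a => ?_⟩
  · have : (fun x : X => ((1 : X → 𝓜(ℂ, A)) x).fst a) = fun _ => a := by
      funext x
      simp [Pi.one_apply, DoubleCentralizer.one_fst, ContinuousLinearMap.one_apply]
    rw [this]; exact continuous_const
  · have : (fun x : X => ((1 : X → 𝓜(ℂ, A)) x).snd a) = fun _ => a := by
      funext x
      simp [Pi.one_apply, DoubleCentralizer.one_snd, ContinuousLinearMap.one_apply]
    rw [this]; exact continuous_const

lemma norm_coe_le {B : Type*} [NonUnitalCStarAlgebra B] (a : B) : ‖(a : 𝓜(ℂ, B))‖ ≤ ‖a‖ := by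
  rw [← DoubleCentralizer.norm_fst, DoubleCentralizer.coe_fst]
  refine ContinuousLinearMap.opNorm_le_bound _ (norm_nonneg a) fun c => ?_
  simpa [ContinuousLinearMap.mul_apply'] using norm_mul_le a c

lemma coe_comp_mem (f : C₀(X, A)) : (fun x => ((f x : A) : 𝓜(ℂ, A))) ∈ Sstr X A := by
  refine ⟨⟨‖f‖, fun x => (norm_coe_le _).trans (C0_norm_apply_le f x)⟩,
    fun a => ?_, fun a => ?_⟩
  · have : (fun x => ((f x : A) : 𝓜(ℂ, A)).fst a) = fun x => f x * a := by
      funext x; rw [DoubleCentralizer.coe_fst]; rfl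
    rw [this]; exact (map_continuous f).mul continuous_const
  · have : (fun x => ((f x : A) : 𝓜(ℂ, A)).snd a) = fun x => a * f x := by
      funext x; rw [DoubleCentralizer.coe_snd]; rfl
    rw [this]; exact continuous_const.mul (map_continuous f)

lemma mult_ext {S T : 𝓜(ℂ, C₀(X, A))} (h1 : ∀ f x, S.fst f x = T.fst f x)
    (h2 : ∀ f x, S.snd f x = T.snd f x) : S = T := by
  ext : 1
  exact Prod.ext
    (ContinuousLinearMap.ext fun f => ZeroAtInftyContinuousMap.ext fun x => h1 f x)
    (ContinuousLinearMap.ext fun f => ZeroAtInftyContinuousMap.ext fun x => h2 f x)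



end helpers

section helpers2
variable {X : Type*} [TopologicalSpace X] [LocallyCompactSpace X] [T2Space X]
variable {A : Type*} [NonUnitalCStarAlgebra A]

lemma theta_isStarHom : IsStarHom X A (theta (X := X) (A := A)) := by
  refine ⟨fun b b' c h => ?_, fun z b c h => ?_, fun b b' c h => ?_, fun b c h => ?_⟩
  · refine mult_ext (fun f x => ?_) (fun f x => ?_)
    · show (c.val x).fst (f x) = ((theta b + theta b').fst f) x
      rw [h x, DoubleCentralizer.add_fst, DoubleCentralizer.add_fst,
        ContinuousLinearMap.add_apply, ContinuousLinearMap.add_apply,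
        ZeroAtInftyContinuousMap.add_apply]
      rfl
    · show (c.val x).snd (f x) = ((theta b + theta b').snd f) x
      rw [h x, DoubleCentralizer.add_snd, DoubleCentralizer.add_snd,
        ContinuousLinearMap.add_apply, ContinuousLinearMap.add_apply,
        ZeroAtInftyContinuousMap.add_apply]
      rfl
  · refine mult_ext (fun f x => ?_) (fun f x => ?_)
    · show (c.val x).fst (f x) = ((z • theta b).fst f) x
      rw [h x, DoubleCentralizer.smul_fst, DoubleCentralizer.smul_fst,
        ContinuousLinearMap.smul_apply, ContinuousLinearMap.smul_apply,
        ZeroAtInftyContinuousMap.smul_apply]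
      rfl
    · show (c.val x).snd (f x) = ((z • theta b).snd f) x
      rw [h x, DoubleCentralizer.smul_snd, DoubleCentralizer.smul_snd,
        ContinuousLinearMap.smul_apply, ContinuousLinearMap.smul_apply,
        ZeroAtInftyContinuousMap.smul_apply]
      rfl
  · refine mult_ext (fun f x => ?_) (fun f x => ?_)
    · show (c.val x).fst (f x) = ((theta b * theta b').fst f) x
      rw [h x, DoubleCentralizer.mul_fst, DoubleCentralizer.mul_fst,
        ContinuousLinearMap.mul_apply, ContinuousLinearMap.mul_apply]
      rfl
    · show (c.val x).snd (f x) = ((theta b * theta b').snd f) x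
      rw [h x, DoubleCentralizer.mul_snd, DoubleCentralizer.mul_snd,
        ContinuousLinearMap.mul_apply, ContinuousLinearMap.mul_apply]
      rfl
  · refine mult_ext (fun f x => ?_) (fun f x => ?_)
    · show (c.val x).fst (f x) = ((star (theta b)).fst f) x
      rw [h x, DoubleCentralizer.star_fst, DoubleCentralizer.star_fst,
        ZeroAtInftyContinuousMap.star_apply]
      show star ((b.val x).snd (star (f x))) = star ((b.val x).snd ((star f) x))
      rw [ZeroAtInftyContinuousMap.star_apply]
    · show (c.val x).snd (f x) = ((star (theta b)).snd f) x
      rw [h x, DoubleCentralizer.star_snd, DoubleCentralizer.star_snd,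
        ZeroAtInftyContinuousMap.star_apply]
      show star ((b.val x).fst (star (f x))) = star ((b.val x).fst ((star f) x))
      rw [ZeroAtInftyContinuousMap.star_apply]

lemma theta_extends : ExtendsCanonicalEmbedding X A (theta (X := X) (A := A)) := by
  intro f b h
  refine mult_ext (fun g x => ?_) (fun g x => ?_)
  · show (b.val x).fst (g x) = (((f : 𝓜(ℂ, C₀(X, A))).fst g)) x
    rw [h x, DoubleCentralizer.coe_fst, DoubleCentralizer.coe_fst]
    show f x * g x = (f * g) x
    rw [ZeroAtInftyContinuousMap.mul_apply]
  · show (b.val x).snd (g x) = (((f : 𝓜(ℂ, C₀(X, A))).snd g)) x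
    rw [h x, DoubleCentralizer.coe_snd, DoubleCentralizer.coe_snd]
    show g x * f x = (g * f) x
    rw [ZeroAtInftyContinuousMap.mul_apply]

lemma theta_unique (Ψ : ↥(Sstr X A) → 𝓜(ℂ, C₀(X, A))) (hΨ : IsStarHom X A Ψ)
    (hΨe : ExtendsCanonicalEmbedding X A Ψ) : Ψ = theta := by
  have key : ∀ (Φ : ↥(Sstr X A) → 𝓜(ℂ, C₀(X, A))), IsStarHom X A Φ →
      ExtendsCanonicalEmbedding X A Φ → ∀ (b : ↥(Sstr X A)) (f : C₀(X, A)),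
      Φ b * ((f : 𝓜(ℂ, C₀(X, A)))) = ((lact b f : C₀(X, A)) : 𝓜(ℂ, C₀(X, A))) := by
    intro Φ hΦ hΦe b f
    set fC : ↥(Sstr X A) := ⟨fun x => ((f x : A) : 𝓜(ℂ, A)), coe_comp_mem f⟩ with hfC
    set c : ↥(Sstr X A) := ⟨b.val * fC.val, Sstr.mul_mem b.2 fC.2⟩ with hc
    have h1 : Φ c = Φ b * Φ fC := hΦ.2.2.1 b fC c fun x => rfl
    have h2 : Φ fC = ((f : 𝓜(ℂ, C₀(X, A)))) := hΦe f fC fun x => rfl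
    have h3 : Φ c = ((lact b f : C₀(X, A)) : 𝓜(ℂ, C₀(X, A))) := by
      refine hΦe (lact b f) c fun x => ?_
      show b.val x * ((f x : A) : 𝓜(ℂ, A)) = _
      rw [mul_coe_eq]
      rfl
    rw [← h2, ← h1, h3]
  funext b
  have hsub : ∀ f : C₀(X, A), (Ψ b - theta b) * ((f : 𝓜(ℂ, C₀(X, A)))) = 0 := by
    intro f
    rw [sub_mul, key Ψ hΨ hΨe b f, key theta theta_isStarHom theta_extends b f, sub_self]
  have hzero : Ψ b - theta b = 0 := by
    set d := Ψ b - theta b with hd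
    have hfst : ∀ f : C₀(X, A), d.fst f = 0 := by
      intro f
      have h0 := hsub f
      rw [mul_coe_eq] at h0
      refine eq_zero_of_forall_mul_right fun g => ?_
      have h1 := congrArg (fun m : 𝓜(ℂ, C₀(X, A)) => m.fst g) h0
      simpa [DoubleCentralizer.coe_fst, ContinuousLinearMap.mul_apply',
        DoubleCentralizer.zero_fst] using h1
    have hsnd : ∀ f : C₀(X, A), d.snd f = 0 := by
      intro f
      refine eq_zero_of_forall_mul_right fun g => ?_
      rw [d.central f g, hfst g, mul_zero]
    ext : 1
    exact Prod.ext (ContinuousLinearMap.ext fun f => hfst f)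
      (ContinuousLinearMap.ext fun f => hsnd f)
  have := sub_eq_zero.mp hzero
  exact this



end helpers2

/-- **`C_b^str(X, M(A)) ≅ M(C₀(X,A))`.** The bounded strictly continuous `M(A)`-valued
functions are closed under the pointwise operations, and the map `Θ` given by pointwise
multiplication is an isometric *-isomorphism onto `M(C₀(X,A))`, uniquely determined as
a *-homomorphism extending the canonical embedding of `C₀(X,A)`. -/
theorem strictlyContinuousBounded_isomorphic_multiplier_of_C0 :
    -- closure under the pointwise operations (and the unit): `C_b^str` is a C*-algebra
    (∀ b ∈ Sstr X A, ∀ b' ∈ Sstr X A, b + b' ∈ Sstr X A) ∧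
    (∀ (z : ℂ), ∀ b ∈ Sstr X A, z • b ∈ Sstr X A) ∧
    (∀ b ∈ Sstr X A, ∀ b' ∈ Sstr X A, b * b' ∈ Sstr X A) ∧
    (∀ b ∈ Sstr X A, star b ∈ Sstr X A) ∧
    ((1 : X → 𝓜(ℂ, A)) ∈ Sstr X A) ∧
    -- the isomorphism `Θ`
    ∃ Θ : ↥(Sstr X A) → 𝓜(ℂ, C₀(X, A)),
      -- `Θ(b)` acts on `C₀(X,A)` by pointwise multiplication
      (∀ (b : ↥(Sstr X A)) (f : C₀(X, A)) (x : X),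
        ((Θ b).fst f) x = (b.val x).fst (f x) ∧ ((Θ b).snd f) x = (b.val x).snd (f x)) ∧
      Function.Bijective Θ ∧
      -- `Θ` is isometric for the supremum norm
      (∀ b : ↥(Sstr X A), ‖Θ b‖ = ⨆ x : X, ‖b.val x‖) ∧
      IsStarHom X A Θ ∧
      ExtendsCanonicalEmbedding X A Θ ∧
      -- uniqueness: any *-homomorphism extending the canonical embedding equals `Θ`
      ∀ Ψ : ↥(Sstr X A) → 𝓜(ℂ, C₀(X, A)),
        IsStarHom X A Ψ → ExtendsCanonicalEmbedding X A Ψ → Ψ = Θ := by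
  refine ⟨fun b hb b' hb' => Sstr.add_mem hb hb', fun z b hb => Sstr.smul_mem z hb,
    fun b hb b' hb' => Sstr.mul_mem hb hb', fun b hb => Sstr.star_mem hb, Sstr.one_mem,
    theta, fun b f x => ⟨rfl, rfl⟩,
    ⟨theta_injective, fun T => ⟨⟨bOf T, bOf_mem T⟩, theta_bOf T⟩⟩,
    theta_norm, theta_isStarHom, theta_extends, theta_unique⟩

end Stmt5
end

section
/- Let A and B be Banach algebras with contractive approximate units and let E be a nondegenerate Banach A-B-bimodule. Let F be a Banach A-B-bimodule containing E isometrically as a closed sub-bimodule and such that a·ξ ∈ E and ξ·b ∈ E for every ξ ∈ F, a ∈ A, b ∈ B. Then there exists a unique A-B-bimodule map μ : F → M(E) whose restriction to E is the canonical embedding ι : E → M(E); this μ is automatically contractive; and μ is injective if and only if F is essential, i.e. for ξ ∈ F, a·ξ = 0 for all a ∈ A implies ξ = 0. (This is the paper's universal characterisation of the multiplier bimodule M(E) as the largest essential multiplier extension of E.) -/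
/-!
STATEMENT 7: Universal characterisation of the multiplier bimodule `M(E)` of a
nondegenerate Banach `A`-`B`-bimodule `E` as the largest essential multiplier
extension: if `F` is a Banach `A`-`B`-bimodule containing `E` isometrically as a closed
sub-bimodule (via `j : E → F`) with `a·ξ ∈ E` and `ξ·b ∈ E` for all `ξ ∈ F`, then there
is a unique `A`-`B`-bimodule map `μ : F → M(E)` extending the canonical embedding
`ι : E → M(E)`; it is automatically contractive, and it is injective iff `F` is
essential.

Bimodule actions are encoded as continuous bilinear maps (`lE a ξ = a·ξ`,
`rE b ξ = ξ·b`, and similarly `lF`, `rF` on `F`).  Multipliers of `E` are pairs `(R,L)`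
of bounded linear maps with `a·L(b) = R(a)·b`, inside `(A →L[ℂ] E) × (B →L[ℂ] E)` (with
the max norm), carrying the actions `a·(R,L) = (a₀ ↦ R(a₀a), b₀ ↦ a·L(b₀))`,
`(R,L)·b = (a₀ ↦ R(a₀)·b, b₀ ↦ L(b·b₀))`; `ι(ξ) = (a ↦ a·ξ, b ↦ ξ·b)`.
-/

open Filter

namespace Stmt7

universe u v w x

/-- `A` has a contractive (two-sided) approximate unit. -/
def HasCAI (A : Type u) [NonUnitalNormedRing A] : Prop :=
  ∃ (ι : Type u) (l : Filter ι) (e : ι → A), l.NeBot ∧ (∀ i, ‖e i‖ ≤ 1) ∧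
    ∀ a : A, Tendsto (fun i => ‖e i * a - a‖) l (nhds 0) ∧
      Tendsto (fun i => ‖a * e i - a‖) l (nhds 0)

variable {A : Type u} {B : Type v} {E : Type w} {F : Type x}
variable [NonUnitalNormedRing A] [NormedSpace ℂ A] [IsScalarTower ℂ A A] [SMulCommClass ℂ A A]
variable [NonUnitalNormedRing B] [NormedSpace ℂ B] [IsScalarTower ℂ B B] [SMulCommClass ℂ B B]
variable [NormedAddCommGroup E] [NormedSpace ℂ E] [CompleteSpace E]
variable [NormedAddCommGroup F] [NormedSpace ℂ F] [CompleteSpace F]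

section Defs

variable (lE : A →L[ℂ] E →L[ℂ] E) (rE : B →L[ℂ] E →L[ℂ] E)

/-- `(lE, rE)` makes `E` a Banach `A`-`B`-bimodule. -/
structure IsBanachBimodule : Prop where
  lsmul_mul : ∀ a a' ξ, lE (a * a') ξ = lE a (lE a' ξ)
  rsmul_mul : ∀ b b' ξ, rE (b * b') ξ = rE b' (rE b ξ)
  smul_comm : ∀ a b ξ, rE b (lE a ξ) = lE a (rE b ξ)
  norm_lsmul : ∀ a ξ, ‖lE a ξ‖ ≤ ‖a‖ * ‖ξ‖
  norm_rsmul : ∀ b ξ, ‖rE b ξ‖ ≤ ‖b‖ * ‖ξ‖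

/-- The bimodule `E` is nondegenerate. -/
def NondegenerateBimodule : Prop :=
  closure (↑(Submodule.span ℂ {y : E | ∃ a ξ, lE a ξ = y}) : Set E) = Set.univ ∧
    closure (↑(Submodule.span ℂ {y : E | ∃ b ξ, rE b ξ = y}) : Set E) = Set.univ

/-- A multiplier of `E`: a pair `(R, L)` with `a·L(b) = R(a)·b`. -/
def IsMultiplier (p : (A →L[ℂ] E) × (B →L[ℂ] E)) : Prop :=
  ∀ a b, lE a (p.2 b) = rE b (p.1 a)

/-- The canonical map `ι : E → M(E)`. -/
noncomputable def iota (ξ : E) : (A →L[ℂ] E) × (B →L[ℂ] E) := (lE.flip ξ, rE.flip ξ)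

/-- The left action of `A` on multipliers. -/
noncomputable def aAct (a : A) (p : (A →L[ℂ] E) × (B →L[ℂ] E)) :
    (A →L[ℂ] E) × (B →L[ℂ] E) :=
  (p.1.comp ((ContinuousLinearMap.mul ℂ A).flip a), (lE a).comp p.2)

/-- The right action of `B` on multipliers. -/
noncomputable def bAct (p : (A →L[ℂ] E) × (B →L[ℂ] E)) (b : B) :
    (A →L[ℂ] E) × (B →L[ℂ] E) :=
  ((rE b).comp p.1, p.2.comp (ContinuousLinearMap.mul ℂ B b))

end Defs

variable (lE : A →L[ℂ] E →L[ℂ] E) (rE : B →L[ℂ] E →L[ℂ] E)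
variable (lF : A →L[ℂ] F →L[ℂ] F) (rF : B →L[ℂ] F →L[ℂ] F)

/-- `μ : F → M(E)` is an `A`-`B`-bimodule map into the multipliers of `E` whose
restriction along `j : E → F` is the canonical embedding `ι : E → M(E)`. -/
def IsBimoduleMapExtendingIota (j : E → F) (μ : F → (A →L[ℂ] E) × (B →L[ℂ] E)) : Prop :=
  (∀ ξ : F, IsMultiplier lE rE (μ ξ)) ∧
    (∀ ξ η : F, μ (ξ + η) = μ ξ + μ η) ∧
    (∀ (c : ℂ) (ξ : F), μ (c • ξ) = c • μ ξ) ∧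
    (∀ (a : A) (ξ : F), μ (lF a ξ) = aAct lE a (μ ξ)) ∧
    (∀ (b : B) (ξ : F), μ (rF b ξ) = bAct rE (μ ξ) b) ∧
    ∀ ξ : E, μ (j ξ) = iota lE rE ξ


private lemma ess_aux {A : Type u} {E : Type w}
    [NonUnitalNormedRing A] [NormedSpace ℂ A]
    [NormedAddCommGroup E] [NormedSpace ℂ E]
    (lE : A →L[ℂ] E →L[ℂ] E)
    (hmul : ∀ a a' ξ, lE (a * a') ξ = lE a (lE a' ξ))
    (hnorm : ∀ a ξ, ‖lE a ξ‖ ≤ ‖a‖ * ‖ξ‖)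
    (hcl : closure (↑(Submodule.span ℂ {y : E | ∃ a ξ, lE a ξ = y}) : Set E) = Set.univ)
    {ι : Type u} {l : Filter ι} {e : ι → A} (hne : l.NeBot) (hle : ∀ i, ‖e i‖ ≤ 1)
    (hconv : ∀ a : A, Tendsto (fun i => ‖e i * a - a‖) l (nhds 0))
    {η : E} (h0 : ∀ a : A, lE a η = 0) : η = 0 := by
  haveI := hne
  have key : ∀ y ∈ Submodule.span ℂ {y : E | ∃ a ξ, lE a ξ = y},
      Tendsto (fun i => lE (e i) y) l (nhds y) := by
    intro y hy
    induction hy using Submodule.span_induction with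
    | mem y hy =>
      obtain ⟨a, ξ, rfl⟩ := hy
      have h1 : Tendsto (fun i => e i * a) l (nhds a) :=
        tendsto_iff_norm_sub_tendsto_zero.mpr (hconv a)
      have h2 : Tendsto (fun i => lE (e i * a) ξ) l (nhds (lE a ξ)) :=
        ((lE.flip ξ).continuous.tendsto a).comp h1
      simpa [hmul] using h2
    | zero => simpa using tendsto_const_nhds
    | add x y _ _ ihx ihy => simpa [map_add] using ihx.add ihy
    | smul c x _ ih => simpa [map_smul] using ih.const_smul c
  have keyAll : Tendsto (fun i => lE (e i) η) l (nhds η) := by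
    rw [Metric.tendsto_nhds]
    intro ε hε
    have hη : η ∈ closure (↑(Submodule.span ℂ {y : E | ∃ a ξ, lE a ξ = y}) : Set E) := by
      rw [hcl]; trivial
    obtain ⟨y, hy, hyd⟩ := Metric.mem_closure_iff.mp hη (ε / 3) (by positivity)
    have h2 := (Metric.tendsto_nhds.mp (key y hy)) (ε / 3) (by positivity)
    filter_upwards [h2] with i hi
    have hb1 : dist (lE (e i) η) (lE (e i) y) < ε / 3 := by
      rw [dist_eq_norm]
      calc ‖lE (e i) η - lE (e i) y‖ = ‖lE (e i) (η - y)‖ := by rw [map_sub]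
        _ ≤ ‖e i‖ * ‖η - y‖ := hnorm _ _
        _ ≤ 1 * ‖η - y‖ := by
            exact mul_le_mul_of_nonneg_right (hle i) (norm_nonneg _)
        _ = dist η y := by rw [one_mul, dist_eq_norm]
        _ < ε / 3 := hyd
    calc dist (lE (e i) η) η
        ≤ dist (lE (e i) η) (lE (e i) y) + dist (lE (e i) y) y + dist y η :=
          dist_triangle4 _ _ _ _
      _ < ε / 3 + ε / 3 + ε / 3 := by
          have : dist y η < ε / 3 := by rw [dist_comm]; exact hyd
          gcongr
      _ = ε := by ring
  have hz : Tendsto (fun _ : ι => (0 : E)) l (nhds η) := by simpa [h0] using keyAll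
  exact tendsto_nhds_unique hz tendsto_const_nhds

private lemma vanish_aux {A : Type u} {E : Type w}
    [NonUnitalNormedRing A] [NormedSpace ℂ A]
    [NormedAddCommGroup E] [NormedSpace ℂ E]
    (hmem : ∀ a : A, a ∈ closure (↑(Submodule.span ℂ {y : A | ∃ p q : A, p * q = y}) : Set A))
    (D : A →L[ℂ] E) (hD : ∀ p q : A, D (p * q) = 0) : D = 0 := by
  ext a
  have hsub : (↑(Submodule.span ℂ {y : A | ∃ p q : A, p * q = y}) : Set A)
      ⊆ (LinearMap.ker (D : A →ₗ[ℂ] E) : Set A) := by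
    have : Submodule.span ℂ {y : A | ∃ p q : A, p * q = y} ≤ LinearMap.ker (D : A →ₗ[ℂ] E) :=
      Submodule.span_le.mpr (by rintro y ⟨p, q, rfl⟩; exact hD p q)
    exact this
  have hker : a ∈ (LinearMap.ker (D : A →ₗ[ℂ] E) : Set A) :=
    closure_minimal hsub (ContinuousLinearMap.isClosed_ker D) (hmem a)
  simpa using hker

/-- **Universal property of the multiplier bimodule.**  If `E` is a nondegenerate Banach
`A`-`B`-bimodule, `F` is a multiplier extension of `E` along `j`, then there is a unique
bimodule map `μ : F → M(E)` extending `ι`; it is contractive, and injective iff `F` is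
essential. -/
theorem multiplier_bimodule_universal_property
    (hA : HasCAI A) (hB : HasCAI B)
    (hbimE : IsBanachBimodule lE rE) (hndE : NondegenerateBimodule lE rE)
    (hbimF : IsBanachBimodule lF rF)
    (j : E → F)
    -- `j` realises `E` isometrically as a closed sub-bimodule of `F`
    (hj_add : ∀ ξ η : E, j (ξ + η) = j ξ + j η)
    (hj_smul : ∀ (c : ℂ) (ξ : E), j (c • ξ) = c • j ξ)
    (hj_isom : ∀ ξ : E, ‖j ξ‖ = ‖ξ‖)
    (hj_closed : IsClosed (Set.range j))
    (hj_l : ∀ (a : A) (ξ : E), j (lE a ξ) = lF a (j ξ))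
    (hj_r : ∀ (b : B) (ξ : E), j (rE b ξ) = rF b (j ξ))
    -- `A·F ⊆ E` and `F·B ⊆ E`
    (hFA : ∀ (a : A) (ξ : F), lF a ξ ∈ Set.range j)
    (hFB : ∀ (b : B) (ξ : F), rF b ξ ∈ Set.range j) :
    ∃ μ : F → (A →L[ℂ] E) × (B →L[ℂ] E),
      IsBimoduleMapExtendingIota lE rE lF rF j μ ∧
      (∀ μ' : F → (A →L[ℂ] E) × (B →L[ℂ] E),
        IsBimoduleMapExtendingIota lE rE lF rF j μ' → μ' = μ) ∧
      (∀ ξ : F, ‖μ ξ‖ ≤ ‖ξ‖) ∧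
      (Function.Injective μ ↔ ∀ ξ : F, (∀ a : A, lF a ξ = 0) → ξ = 0) := by
  classical
  haveI : Nonempty E := ⟨0⟩
  -- basic properties of `j`
  have hj0 : j 0 = 0 := by
    have h := hj_add 0 0
    rw [add_zero] at h
    exact (left_eq_add.mp h)
  have hj_sub : ∀ ξ η : E, j (ξ - η) = j ξ - j η := by
    intro ξ η
    have h1 : j (ξ + (-1 : ℂ) • η) = j ξ + (-1 : ℂ) • j η := by rw [hj_add, hj_smul]
    simpa [sub_eq_add_neg, neg_smul, one_smul] using h1
  have hjinj : Function.Injective j := by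
    intro x y hxy
    have h : ‖x - y‖ = 0 := by rw [← hj_isom, hj_sub, hxy, sub_self, norm_zero]
    exact sub_eq_zero.mp (norm_eq_zero.mp h)
  set jinv : F → E := Function.invFun j with hjinvdef
  have hjinv : ∀ {y : F}, y ∈ Set.range j → j (jinv y) = y := fun hy => Function.invFun_eq hy
  have hjinv_j : ∀ ξ : E, jinv (j ξ) = ξ := fun ξ => Function.leftInverse_invFun hjinj ξ
  have hjF : ∀ (a : A) (ξ : F), j (jinv (lF a ξ)) = lF a ξ := fun a ξ => hjinv (hFA a ξ)
  have hjFr : ∀ (b : B) (ξ : F), j (jinv (rF b ξ)) = rF b ξ := fun b ξ => hjinv (hFB b ξ)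
  have hjinv_norm_l : ∀ (a : A) (ξ : F), ‖jinv (lF a ξ)‖ = ‖lF a ξ‖ := fun a ξ => by
    rw [← hj_isom (jinv (lF a ξ)), hjF]
  have hjinv_norm_r : ∀ (b : B) (ξ : F), ‖jinv (rF b ξ)‖ = ‖rF b ξ‖ := fun b ξ => by
    rw [← hj_isom (jinv (rF b ξ)), hjFr]
  -- the candidate map μ
  let R : F → A →L[ℂ] E := fun ξ =>
    LinearMap.mkContinuous
      { toFun := fun a => jinv (lF a ξ)
        map_add' := fun a a' => by
          apply hjinj
          rw [hjF, hj_add, hjF, hjF, map_add, ContinuousLinearMap.add_apply]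
        map_smul' := fun c a => by
          apply hjinj
          simp only [RingHom.id_apply]
          rw [hjF, hj_smul, hjF, map_smul, ContinuousLinearMap.smul_apply] }
      ‖ξ‖ (fun a => by
        show ‖jinv (lF a ξ)‖ ≤ ‖ξ‖ * ‖a‖
        rw [hjinv_norm_l]
        calc ‖lF a ξ‖ ≤ ‖a‖ * ‖ξ‖ := hbimF.norm_lsmul a ξ
          _ = ‖ξ‖ * ‖a‖ := mul_comm _ _)
  let L : F → B →L[ℂ] E := fun ξ =>
    LinearMap.mkContinuous
      { toFun := fun b => jinv (rF b ξ)
        map_add' := fun b b' => by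
          apply hjinj
          rw [hjFr, hj_add, hjFr, hjFr, map_add, ContinuousLinearMap.add_apply]
        map_smul' := fun c b => by
          apply hjinj
          simp only [RingHom.id_apply]
          rw [hjFr, hj_smul, hjFr, map_smul, ContinuousLinearMap.smul_apply] }
      ‖ξ‖ (fun b => by
        show ‖jinv (rF b ξ)‖ ≤ ‖ξ‖ * ‖b‖
        rw [hjinv_norm_r]
        calc ‖rF b ξ‖ ≤ ‖b‖ * ‖ξ‖ := hbimF.norm_rsmul b ξ
          _ = ‖ξ‖ * ‖b‖ := mul_comm _ _)
  let μ : F → (A →L[ℂ] E) × (B →L[ℂ] E) := fun ξ => (R ξ, L ξ)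
  have hμ1 : ∀ (ξ : F) (a : A), (μ ξ).1 a = jinv (lF a ξ) := fun _ _ => rfl
  have hμ2 : ∀ (ξ : F) (b : B), (μ ξ).2 b = jinv (rF b ξ) := fun _ _ => rfl
  -- multiplier property
  have hmult : ∀ ξ : F, IsMultiplier lE rE (μ ξ) := by
    intro ξ a b
    rw [hμ1, hμ2]
    apply hjinj
    rw [hj_l, hjFr, hj_r, hjF]
    exact (hbimF.smul_comm a b ξ).symm
  -- additivity
  have hadd : ∀ ξ η : F, μ (ξ + η) = μ ξ + μ η := by
    intro ξ η
    refine Prod.ext ?_ ?_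
    · ext a
      simp only [Prod.fst_add, ContinuousLinearMap.add_apply, hμ1]
      apply hjinj
      rw [hjF, hj_add, hjF, hjF, map_add]
    · ext b
      simp only [Prod.snd_add, ContinuousLinearMap.add_apply, hμ2]
      apply hjinj
      rw [hjFr, hj_add, hjFr, hjFr, map_add]
  -- scalar multiplication
  have hsmul : ∀ (c : ℂ) (ξ : F), μ (c • ξ) = c • μ ξ := by
    intro c ξ
    refine Prod.ext ?_ ?_
    · ext a
      simp only [Prod.smul_fst, ContinuousLinearMap.smul_apply, hμ1]
      apply hjinj
      rw [hjF, hj_smul, hjF, map_smul]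
    · ext b
      simp only [Prod.smul_snd, ContinuousLinearMap.smul_apply, hμ2]
      apply hjinj
      rw [hjFr, hj_smul, hjFr, map_smul]
  -- left action
  have hact : ∀ (a : A) (ξ : F), μ (lF a ξ) = aAct lE a (μ ξ) := by
    intro a ξ
    refine Prod.ext ?_ ?_
    · ext a₀
      simp only [aAct, ContinuousLinearMap.comp_apply, ContinuousLinearMap.flip_apply,
        ContinuousLinearMap.mul_apply', hμ1]
      apply hjinj
      rw [hjF, hjF]
      exact (hbimF.lsmul_mul a₀ a ξ).symm
    · ext b₀
      simp only [aAct, ContinuousLinearMap.comp_apply, hμ2]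
      apply hjinj
      rw [hjFr, hj_l, hjFr]
      exact hbimF.smul_comm a b₀ ξ
  -- right action
  have hbct : ∀ (b : B) (ξ : F), μ (rF b ξ) = bAct rE (μ ξ) b := by
    intro b ξ
    refine Prod.ext ?_ ?_
    · ext a₀
      simp only [bAct, ContinuousLinearMap.comp_apply, hμ1]
      apply hjinj
      rw [hjF, hj_r, hjF]
      exact (hbimF.smul_comm a₀ b ξ).symm
    · ext b₀
      simp only [bAct, ContinuousLinearMap.comp_apply, ContinuousLinearMap.mul_apply', hμ2]
      apply hjinj
      rw [hjFr, hjFr]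
      exact (hbimF.rsmul_mul b b₀ ξ).symm
  -- extension of ι
  have hext : ∀ ξ : E, μ (j ξ) = iota lE rE ξ := by
    intro ξ
    refine Prod.ext ?_ ?_
    · ext a
      simp only [iota, ContinuousLinearMap.flip_apply, hμ1]
      rw [← hj_l, hjinv_j]
    · ext b
      simp only [iota, ContinuousLinearMap.flip_apply, hμ2]
      rw [← hj_r, hjinv_j]
  -- contractivity
  have hnorm : ∀ ξ : F, ‖μ ξ‖ ≤ ‖ξ‖ := by
    intro ξ
    rw [Prod.norm_def]
    apply max_le
    · refine ContinuousLinearMap.opNorm_le_bound _ (norm_nonneg ξ) fun a => ?_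
      show ‖jinv (lF a ξ)‖ ≤ ‖ξ‖ * ‖a‖
      rw [hjinv_norm_l]
      calc ‖lF a ξ‖ ≤ ‖a‖ * ‖ξ‖ := hbimF.norm_lsmul a ξ
        _ = ‖ξ‖ * ‖a‖ := mul_comm _ _
    · refine ContinuousLinearMap.opNorm_le_bound _ (norm_nonneg ξ) fun b => ?_
      show ‖jinv (rF b ξ)‖ ≤ ‖ξ‖ * ‖b‖
      rw [hjinv_norm_r]
      calc ‖rF b ξ‖ ≤ ‖b‖ * ‖ξ‖ := hbimF.norm_rsmul b ξ
        _ = ‖ξ‖ * ‖b‖ := mul_comm _ _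
  -- uniqueness
  have huniq : ∀ μ' : F → (A →L[ℂ] E) × (B →L[ℂ] E),
      IsBimoduleMapExtendingIota lE rE lF rF j μ' → μ' = μ := by
    rintro μ' ⟨-, -, -, hact', hbct', hext'⟩
    obtain ⟨ιA, lA, eA, hneA, hleA, hAc⟩ := hA
    obtain ⟨ιB, lB, eB, hneB, hleB, hBc⟩ := hB
    haveI := hneA; haveI := hneB
    have hmemA : ∀ a : A,
        a ∈ closure (↑(Submodule.span ℂ {y : A | ∃ p q : A, p * q = y}) : Set A) := by
      intro a
      refine mem_closure_of_tendsto (tendsto_iff_norm_sub_tendsto_zero.mpr (hAc a).1) ?_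
      exact Eventually.of_forall fun i => Submodule.subset_span ⟨eA i, a, rfl⟩
    have hmemB : ∀ b : B,
        b ∈ closure (↑(Submodule.span ℂ {y : B | ∃ p q : B, p * q = y}) : Set B) := by
      intro b
      refine mem_closure_of_tendsto (tendsto_iff_norm_sub_tendsto_zero.mpr (hBc b).2) ?_
      exact Eventually.of_forall fun i => Submodule.subset_span ⟨b, eB i, rfl⟩
    funext ξ
    refine Prod.ext ?_ ?_
    · have hD : ∀ p q : A, ((μ' ξ).1 - (μ ξ).1) (p * q) = 0 := by
        intro p q
        have h1 : (μ' ξ).1 (p * q) = lE p (jinv (lF q ξ)) := by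
          calc (μ' ξ).1 (p * q) = (aAct lE q (μ' ξ)).1 p := by
                simp [aAct, ContinuousLinearMap.comp_apply, ContinuousLinearMap.flip_apply,
                  ContinuousLinearMap.mul_apply']
            _ = (μ' (lF q ξ)).1 p := by rw [hact']
            _ = (μ' (j (jinv (lF q ξ)))).1 p := by rw [hjF]
            _ = (iota lE rE (jinv (lF q ξ))).1 p := by rw [hext']
            _ = lE p (jinv (lF q ξ)) := rfl
        have h2 : (μ ξ).1 (p * q) = lE p (jinv (lF q ξ)) := by
          rw [hμ1]
          apply hjinj
          rw [hjF, hj_l, hjF]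
          exact hbimF.lsmul_mul p q ξ
        simp [ContinuousLinearMap.sub_apply, h1, h2]
      have h0 := vanish_aux hmemA _ hD
      exact sub_eq_zero.mp h0
    · have hD : ∀ p q : B, ((μ' ξ).2 - (μ ξ).2) (p * q) = 0 := by
        intro p q
        have h1 : (μ' ξ).2 (p * q) = rE q (jinv (rF p ξ)) := by
          calc (μ' ξ).2 (p * q) = (bAct rE (μ' ξ) p).2 q := by
                simp [bAct, ContinuousLinearMap.comp_apply, ContinuousLinearMap.mul_apply']
            _ = (μ' (rF p ξ)).2 q := by rw [hbct']
            _ = (μ' (j (jinv (rF p ξ)))).2 q := by rw [hjFr]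
            _ = (iota lE rE (jinv (rF p ξ))).2 q := by rw [hext']
            _ = rE q (jinv (rF p ξ)) := rfl
        have h2 : (μ ξ).2 (p * q) = rE q (jinv (rF p ξ)) := by
          rw [hμ2]
          apply hjinj
          rw [hjFr, hj_r, hjFr]
          exact hbimF.rsmul_mul p q ξ
        simp [ContinuousLinearMap.sub_apply, h1, h2]
      have h0 := vanish_aux hmemB _ hD
      exact sub_eq_zero.mp h0
  -- essentiality of E
  have hess : ∀ η : E, (∀ a : A, lE a η = 0) → η = 0 := by
    obtain ⟨ιA, lA, eA, hneA, hleA, hAc⟩ := hA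
    intro η h0
    exact ess_aux lE hbimE.lsmul_mul hbimE.norm_lsmul hndE.1 hneA hleA (fun a => (hAc a).1) h0
  have hjinv0 : jinv (0 : F) = 0 := by rw [← hj0, hjinv_j]
  -- injectivity iff essentiality of F
  have hinj_iff : Function.Injective μ ↔ ∀ ξ : F, (∀ a : A, lF a ξ = 0) → ξ = 0 := by
    constructor
    · intro hinj ξ hξ
      have hμ0 : μ 0 = 0 := by
        have h := hadd 0 0
        rw [add_zero] at h
        exact left_eq_add.mp h
      apply hinj
      rw [hμ0]
      refine Prod.ext ?_ ?_
      · ext a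
        simp only [hμ1, hξ a, Prod.fst_zero, ContinuousLinearMap.zero_apply]
        exact hjinv0
      · ext b
        have hz : ∀ a : A, lE a (jinv (rF b ξ)) = 0 := by
          intro a
          apply hjinj
          rw [hj_l, hjFr, hj0, ← hbimF.smul_comm a b ξ, hξ a, map_zero]
        simp only [hμ2, Prod.snd_zero, ContinuousLinearMap.zero_apply]
        exact hess _ hz
    · intro hessF ξ η hμeq
      have hlf : ∀ a : A, lF a ξ = lF a η := by
        intro a
        have h1 : (μ ξ).1 a = (μ η).1 a := by rw [hμeq]
        rw [hμ1, hμ1] at h1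
        calc lF a ξ = j (jinv (lF a ξ)) := (hjF a ξ).symm
          _ = j (jinv (lF a η)) := by rw [h1]
          _ = lF a η := hjF a η
      have h0 : ξ - η = 0 := hessF (ξ - η) (fun a => by rw [map_sub, hlf a, sub_self])
      exact sub_eq_zero.mp h0
  exact ⟨μ, ⟨hmult, hadd, hsmul, hact, hbct, hext⟩, huniq, hnorm, hinj_iff⟩


end Stmt7
end
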